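/- For any biconed graph G^{A,B} there is a bijection between the set of birooted forests of G^{A,B}_red and the set of 2-edge-rooted forests of G^{A,B}_red. -/

import Mathlib

/-!
Formalization scaffold for "h-vectors of graphic matroids of biconed graphs".

A graph `G` (loops and parallel edges allowed) with vertex set `A ∪ B` is
modelled by an abstract finite edge type `E` with an endpoint map
`ends : E → Sym2 (Fin m ⊕ₗ Fin n)`, where `A = Fin m = {1,…,m}`,
`Ā = B \ A = Fin n = {1̄,…,n̄}` and the finset `S ⊆ Fin m` records `A ∩ B`
(so `B = S ∪ Ā`).  The biconing `G^{A,B}` adds the two vertices `0` and `0̄`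
and the edges `00̄`, `0a (a ∈ A)` and `0̄b (b ∈ B)`.
-/

namespace BiconedPaper

noncomputable section
open scoped Classical

/-! ### Walks in multigraphs presented by an endpoint map -/

/-- A walk in the multigraph with edge set `ε` and endpoint map `ends`. -/
inductive MWalk {ε ν : Type} (ends : ε → Sym2 ν) : ν → ν → Type
  | nil (u : ν) : MWalk ends u u
  | cons {u w : ν} (e : ε) (v : ν) (h : ends e = s(u, v)) (p : MWalk ends v w) :
      MWalk ends u w

namespace MWalk

variable {ε ν : Type} {ends : ε → Sym2 ν}

/-- The list of edges traversed by a walk. -/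
def edges : ∀ {u v : ν}, MWalk ends u v → List ε
  | _, _, nil _ => []
  | _, _, cons e _ _ p => e :: p.edges

/-- The list of vertices visited by a walk. -/
def support : ∀ {u v : ν}, MWalk ends u v → List ν
  | u, _, nil _ => [u]
  | u, _, cons _ _ _ p => u :: p.support

/-- A walk is a path if it visits no vertex twice. -/
def IsPath {u v : ν} (p : MWalk ends u v) : Prop := p.support.Nodup

/-- All edges of the walk belong to the edge set `F`. -/
def edgesIn {u v : ν} (p : MWalk ends u v) (F : Finset ε) : Prop :=
  ∀ e ∈ p.edges, e ∈ F

/-- The number of "bridging" edges traversed by a walk, i.e. steps whose two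
endpoints lie on different sides according to `sideF`. -/
def bridgeCount (sideF : ν → Bool) : ∀ {u v : ν}, MWalk ends u v → ℕ
  | _, _, nil _ => 0
  | u, _, cons _ v' _ p => (if sideF u = sideF v' then 0 else 1) + p.bridgeCount sideF

end MWalk

/-- `u` and `v` are joined by a walk all of whose edges lie in `F`. -/
def Reachable {ε ν : Type} (ends : ε → Sym2 ν) (F : Finset ε) (u v : ν) : Prop :=
  ∃ p : MWalk ends u v, p.edgesIn F

/-- An edge set is acyclic (a forest) iff removing any one of its edges
disconnects the endpoints of that edge.  (In particular no loops and no
parallel pairs.) -/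
def IsAcyclic {ε ν : Type} [DecidableEq ε] (ends : ε → Sym2 ν) (F : Finset ε) : Prop :=
  ∀ e ∈ F, ∀ u v : ν, ends e = s(u, v) → ¬ Reachable ends (F.erase e) u v

/-- A spanning tree: an acyclic edge set connecting every pair of vertices. -/
def IsSpanningTree {ε ν : Type} [DecidableEq ε] (ends : ε → Sym2 ν) (T : Finset ε) : Prop :=
  IsAcyclic ends T ∧ ∀ u v : ν, Reachable ends T u v

/-! ### Biconed graphs -/

/-- The data of a biconed graph `G^{A,B}`:  the graph `G` has vertex set
`A ∪ B` with `A = Fin m`, `Ā = B \ A = Fin n`, `A ∩ B = S`, and abstract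
edge set `E` (so loops and parallel edges are allowed). -/
structure BiconedGraph where
  m : ℕ
  n : ℕ
  E : Type
  fintypeE : Fintype E
  decEqE : DecidableEq E
  ends : E → Sym2 (Fin m ⊕ₗ Fin n)
  S : Finset (Fin m)

namespace BiconedGraph

variable (P : BiconedGraph)

instance : Fintype P.E := P.fintypeE
instance : DecidableEq P.E := P.decEqE

/-- The vertices of `G`, linearly ordered `1 < ⋯ < m < 1̄ < ⋯ < n̄`. -/
abbrev VG := Fin P.m ⊕ₗ Fin P.n

/-- The vertices of `G^{A,B}_red`:  `⊥` is the vertex `0̄`, ordered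
`0̄ < 1 < ⋯ < m < 1̄ < ⋯ < n̄`. -/
abbrev Vred := WithBot P.VG

/-- The vertices of `G^{A,B}`: `⊥` is `0`, ordered `0 < 0̄ < 1 < ⋯ < n̄`. -/
abbrev W := WithBot P.Vred

/-- The vertex `a ∈ A`. -/
def aVert (a : Fin P.m) : P.VG := toLex (Sum.inl a)
/-- The vertex `b ∈ Ā`. -/
def bVert (b : Fin P.n) : P.VG := toLex (Sum.inr b)
/-- Inclusion of the vertices of `G` into those of `G^{A,B}_red`. -/
def liftV (x : P.VG) : P.Vred := (x : WithBot P.VG)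
/-- Inclusion of the vertices of `G^{A,B}_red` into those of `G^{A,B}`. -/
def liftW (x : P.Vred) : P.W := (x : WithBot P.Vred)

/-- The edges of the biconed graph `G^{A,B}`:  the edge `00̄`, the coning
edges `0a (a ∈ A)`, `0̄b (b ∈ Ā)`, `0̄a (a ∈ A ∩ B)`, and the edges of `G`. -/
abbrev EB := Unit ⊕ (Fin P.m ⊕ (Fin P.n ⊕ ({a : Fin P.m // a ∈ P.S} ⊕ P.E)))

/-- The edge `00̄`. -/
abbrev e00 : P.EB := Sum.inl ()
/-- The coning edge `0a`, `a ∈ A`. -/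
abbrev eA (a : Fin P.m) : P.EB := Sum.inr (Sum.inl a)
/-- The coning edge `0̄b`, `b ∈ Ā`. -/
abbrev eB (b : Fin P.n) : P.EB := Sum.inr (Sum.inr (Sum.inl b))
/-- The coning edge `0̄a`, `a ∈ A ∩ B`. -/
abbrev eS (a : {a : Fin P.m // a ∈ P.S}) : P.EB := Sum.inr (Sum.inr (Sum.inr (Sum.inl a)))
/-- An original edge of `G`. -/
abbrev eG (e : P.E) : P.EB := Sum.inr (Sum.inr (Sum.inr (Sum.inr e)))

/-- The endpoint map of `G^{A,B}`. -/
def endsB : P.EB → Sym2 P.W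
  | Sum.inl _ => s((⊥ : P.W), P.liftW ⊥)
  | Sum.inr (Sum.inl a) => s((⊥ : P.W), P.liftW (P.liftV (P.aVert a)))
  | Sum.inr (Sum.inr (Sum.inl b)) => s(P.liftW ⊥, P.liftW (P.liftV (P.bVert b)))
  | Sum.inr (Sum.inr (Sum.inr (Sum.inl a))) => s(P.liftW ⊥, P.liftW (P.liftV (P.aVert a.1)))
  | Sum.inr (Sum.inr (Sum.inr (Sum.inr e))) => (P.ends e).map fun x => P.liftW (P.liftV x)

/-- The spanning tree `T₀`, consisting of `00̄`, the edges `0a (a ∈ A)` and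
the edges `0̄b (b ∈ Ā)`. -/
def T0 : Finset P.EB :=
  Finset.univ.filter fun e => match e with
    | Sum.inl _ => True
    | Sum.inr (Sum.inl _) => True
    | Sum.inr (Sum.inr (Sum.inl _)) => True
    | _ => False

/-- The edges of `G^{A,B}_red` (delete the edges of `T₀` and the vertex `0`):
the edges `0̄a (a ∈ A ∩ B)` together with the edges of `G`. -/
abbrev Ered := {a : Fin P.m // a ∈ P.S} ⊕ P.E

/-- The endpoint map of `G^{A,B}_red`; `⊥` is the vertex `0̄`. -/
def endsRed : P.Ered → Sym2 P.Vred
  | Sum.inl a => s((⊥ : P.Vred), P.liftV (P.aVert a.1))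
  | Sum.inr e => (P.ends e).map P.liftV

/-- Inclusion of the edges of `G^{A,B}_red` into those of `G^{A,B}`. -/
def redToEB : P.Ered → P.EB
  | Sum.inl a => P.eS a
  | Sum.inr e => P.eG e

/-- The edge set `T \ T₀` of `T`, viewed inside `G^{A,B}_red`. -/
def redOf (T : Finset P.EB) : Finset P.Ered :=
  Finset.univ.filter fun e => P.redToEB e ∈ T

/-- `true` on the vertices of `A`, `false` on the vertices of `Ā ∪ {0̄}`. -/
def side : P.Vred → Bool :=
  WithBot.recBotCoe false fun x => Sum.elim (fun _ => true) (fun _ => false) (ofLex x)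

/-- The vertex lies in `A`. -/
def InA (v : P.Vred) : Prop := ∃ a : Fin P.m, v = P.liftV (P.aVert a)

/-- An edge of `G^{A,B}_red` is bridging if it joins a vertex of `A` to a
vertex of `Ā ∪ {0̄}`. -/
def BridgingE (e : P.Ered) : Prop :=
  ∃ u v : P.Vred, P.endsRed e = s(u, v) ∧ P.side u ≠ P.side v

/-! ### 2-edge-rooted forests -/

/-- The underlying edge set `F` of the multiset of edges given by the
multiplicity function `mult` (an edge `e` carries `mult e - 1` edge roots). -/
def mSupport (mult : P.Ered → ℕ) : Finset P.Ered :=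
  Finset.univ.filter fun e => mult e ≠ 0

/-- The degree of the multiset of edges given by `mult`. -/
def deg (mult : P.Ered → ℕ) : ℕ := ∑ e : P.Ered, mult e

/-- Edge `e` meets the connected component of `v` in the edge set `F`. -/
def Touches (F : Finset P.Ered) (v : P.Vred) (e : P.Ered) : Prop :=
  ∃ u : P.Vred, u ∈ P.endsRed e ∧ Reachable P.endsRed F v u

/-- The total number of edge roots in the component of `v`. -/
def compEdgeRoots (mult : P.Ered → ℕ) (v : P.Vred) : ℕ :=
  ∑ e ∈ P.mSupport mult, if P.Touches (P.mSupport mult) v e then mult e - 1 else 0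

/-- The component of `v` is `compCount`-edge-rooted:  the number of its edge
roots, plus `1` if it contains the vertex `0̄`. -/
def compCount (mult : P.Ered → ℕ) (v : P.Vred) : ℕ :=
  P.compEdgeRoots mult v +
    if Reachable P.endsRed (P.mSupport mult) v (⊥ : P.Vred) then 1 else 0

/-- Condition (C3) for the `2`-edge-rooted component of `v`:  the unique
shortest path containing both edge roots (resp. the vertex `0̄` and the edge
root, if the component contains `0̄`) has an odd number of bridging edges.
The shortest path containing two edges is the unique path whose first and
last edges are the two rooted edges; if the two edge roots lie on one common
edge (`mult e = 3`) the path is that single edge. -/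
def C3At (mult : P.Ered → ℕ) (v : P.Vred) : Prop :=
  (Reachable P.endsRed (P.mSupport mult) v (⊥ : P.Vred) →
    ∃ (x : P.Vred) (p : MWalk P.endsRed (⊥ : P.Vred) x),
      p.IsPath ∧ p.edgesIn (P.mSupport mult) ∧
      (∃ e, p.edges.getLast? = some e ∧ 2 ≤ mult e) ∧
      Odd (p.bridgeCount P.side)) ∧
  (¬ Reachable P.endsRed (P.mSupport mult) v (⊥ : P.Vred) →
    ∃ (x y : P.Vred) (p : MWalk P.endsRed x y),
      p.IsPath ∧ p.edgesIn (P.mSupport mult) ∧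
      Reachable P.endsRed (P.mSupport mult) v x ∧
      (∃ e, p.edges.head? = some e ∧ 2 ≤ mult e) ∧
      (∃ e, p.edges.getLast? = some e ∧ 2 ≤ mult e) ∧
      (∀ e, p.edges = [e] → mult e = 3) ∧
      Odd (p.bridgeCount P.side))

/-- `mult : Ered → ℕ` is (the multiplicity function of) a 2-edge-rooted
forest of `G^{A,B}_red`:
(C0) its support is a spanning forest;
(C1) at most one component is `2`-edge-rooted;
(C2) every other component is `0`- or `1`-edge-rooted;
(C3) the parity condition on the path joining the two roots. -/
def Is2ERF (mult : P.Ered → ℕ) : Prop :=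
  IsAcyclic P.endsRed (P.mSupport mult) ∧
  (∀ v : P.Vred, P.compCount mult v ≤ 2) ∧
  (∀ u v : P.Vred, P.compCount mult u = 2 → P.compCount mult v = 2 →
    Reachable P.endsRed (P.mSupport mult) u v) ∧
  (∀ v : P.Vred, P.compCount mult v = 2 → P.C3At mult v)

/-! ### Birooted forests -/

/-- `(F, R)` is a birooted forest of `G^{A,B}_red`:  `F` is a spanning forest,
the root set `R` contains `0̄`, every component of `F` contains at least one
root, no component contains three roots, at most one component contains two
roots, and a component with two roots has one root in `A` and the other in
`Ā ∪ {0̄}`. -/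
def IsBirootedForest (F : Finset P.Ered) (R : Set P.Vred) : Prop :=
  IsAcyclic P.endsRed F ∧
  (⊥ : P.Vred) ∈ R ∧
  (∀ v : P.Vred, ∃ r ∈ R, Reachable P.endsRed F v r) ∧
  (∀ r₁ ∈ R, ∀ r₂ ∈ R, ∀ r₃ ∈ R, r₁ ≠ r₂ → r₁ ≠ r₃ → r₂ ≠ r₃ →
    Reachable P.endsRed F r₁ r₂ → Reachable P.endsRed F r₁ r₃ → False) ∧
  (∀ r₁ ∈ R, ∀ r₂ ∈ R, ∀ r₃ ∈ R, ∀ r₄ ∈ R, r₁ ≠ r₂ → r₃ ≠ r₄ →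
    Reachable P.endsRed F r₁ r₂ → Reachable P.endsRed F r₃ r₄ →
    Reachable P.endsRed F r₁ r₃) ∧
  (∀ r₁ ∈ R, ∀ r₂ ∈ R, r₁ ≠ r₂ → Reachable P.endsRed F r₁ r₂ →
    (P.InA r₁ ∧ ¬ P.InA r₂) ∨ (P.InA r₂ ∧ ¬ P.InA r₁))

/-! ### Internal activity and the edge order -/

/-- `e` is internally passive in the spanning tree `T`:  it can be exchanged
for a strictly smaller edge `f` so that the result is again a spanning tree. -/
def InternallyPassive (ord : LinearOrder P.EB) (T : Finset P.EB) (e : P.EB) : Prop :=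
  e ∈ T ∧ ∃ f : P.EB, ord.lt f e ∧ IsSpanningTree P.endsB (insert f (T.erase e))

/-- `e` is internally active in the spanning tree `T`. -/
def InternallyActive (ord : LinearOrder P.EB) (T : Finset P.EB) (e : P.EB) : Prop :=
  e ∈ T ∧ ¬ ∃ f : P.EB, ord.lt f e ∧ IsSpanningTree P.endsB (insert f (T.erase e))

/-- The number of internally passive edges of `T`. -/
def ipCount (ord : LinearOrder P.EB) (T : Finset P.EB) : ℕ :=
  (T.filter fun e => P.InternallyPassive ord T e).card

/-- The smaller endpoint of an edge of `G^{A,B}`. -/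
def endMin (e : P.EB) : P.W := Sym2.lift ⟨fun a b => a ⊓ b, fun a b => inf_comm a b⟩ (P.endsB e)
/-- The larger endpoint of an edge of `G^{A,B}`. -/
def endMax (e : P.EB) : P.W := Sym2.lift ⟨fun a b => a ⊔ b, fun a b => sup_comm a b⟩ (P.endsB e)

/-- The endpoints of an edge, as an ordered pair in the lexicographic square
of the vertex order `0 < 0̄ < 1 < ⋯ < m < 1̄ < ⋯ < n̄`. -/
def lexEnds (e : P.EB) : P.W ×ₗ P.W := toLex (P.endMin e, P.endMax e)

/-- A linear order on the edges of `G^{A,B}` is admissible if it refines the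
lexicographic order on endpoints (so parallel edges are ordered arbitrarily). -/
def AdmissibleOrder (ord : LinearOrder P.EB) : Prop :=
  ∀ e f : P.EB, P.lexEnds e < P.lexEnds f → ord.lt e f

/-- `v` is a connecting vertex of `T`:  `v ∈ A` and `v` is adjacent to `0` in
`T`, or `v ∈ Ā` and `v` is adjacent to `0̄` in `T`. -/
def ConnVertex (T : Finset P.EB) (v : P.Vred) : Prop :=
  (∃ a : Fin P.m, v = P.liftV (P.aVert a) ∧ P.eA a ∈ T) ∨
  (∃ b : Fin P.n, v = P.liftV (P.bVert b) ∧ P.eB b ∈ T)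

/-- `e` is a connecting edge of `T` (an edge `0a`, `a ∈ A`, or `0̄b`, `b ∈ Ā`)
with connecting vertex `v`. -/
def ConnEdge (T : Finset P.EB) (e : P.EB) (v : P.Vred) : Prop :=
  e ∈ T ∧ ((∃ a : Fin P.m, e = P.eA a ∧ v = P.liftV (P.aVert a)) ∨
           (∃ b : Fin P.n, e = P.eB b ∧ v = P.liftV (P.bVert b)))

/-! ### The h-vector -/

/-- `f_{i-1}`:  the number of acyclic edge sets of cardinality `i` in `G^{A,B}`. -/
def numAcyclic (i : ℕ) : ℕ :=
  Nat.card {F : Finset P.EB // IsAcyclic P.endsB F ∧ F.card = i}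

/-- The rank of the graphic matroid of `G^{A,B}`:  `|V| - 1 = m + n + 1`. -/
def d : ℕ := P.m + P.n + 1

/-- `h` is the h-vector of the graphic matroid of `G^{A,B}`:  it satisfies
`Σ_{i=0}^{d} f_{i-1} (t-1)^{d-i} = Σ_{k=0}^{d} h_k t^{d-k}`. -/
def IsHVector (h : ℕ → ℤ) : Prop :=
  ∑ i ∈ Finset.range (P.d + 1),
      Polynomial.C ((P.numAcyclic i : ℤ)) * (Polynomial.X - 1) ^ (P.d - i)
    = ∑ k ∈ Finset.range (P.d + 1), Polynomial.C (h k) * Polynomial.X ^ (P.d - k)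

end BiconedGraph

/-- `(h 0, …, h d)` is a pure O-sequence:  there is a multicomplex `M` of
multisets on a finite ground set (nonempty, closed under sub-multisets), all
of whose inclusion-maximal members have the same cardinality, whose members
all have cardinality at most `d`, and which has exactly `h i` members of
cardinality `i` for every `i ≤ d`. -/
def IsPureOSeq (d : ℕ) (h : ℕ → ℤ) : Prop :=
  ∃ (N : ℕ) (M : Set (Multiset (Fin N))),
    M.Nonempty ∧
    (∀ s ∈ M, ∀ t : Multiset (Fin N), t ≤ s → t ∈ M) ∧
    (∀ s ∈ M, ∀ t ∈ M, (∀ u ∈ M, s ≤ u → u = s) → (∀ u ∈ M, t ≤ u → u = t) →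
      Multiset.card s = Multiset.card t) ∧
    (∀ s ∈ M, Multiset.card s ≤ d) ∧
    (∀ i ≤ d, (Nat.card {s : Multiset (Fin N) // s ∈ M ∧ Multiset.card s = i} : ℤ) = h i)



namespace MWalk

variable {ε ν : Type} {ends : ε → Sym2 ν}

/-- Append two walks. -/
def append : ∀ {u v w : ν}, MWalk ends u v → MWalk ends v w → MWalk ends u w
  | _, _, _, nil _, q => q
  | _, _, _, cons e x h p, q => cons e x h (p.append q)

/-- Reverse a walk. -/
def reverse : ∀ {u v : ν}, MWalk ends u v → MWalk ends v u
  | _, _, nil u => nil u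
  | u, _, cons e x h p => p.reverse.append (cons e u (by rw [h, Sym2.eq_swap]) (nil u))

@[simp] lemma edges_nil {u : ν} : (nil (ends := ends) u).edges = [] := rfl
@[simp] lemma edges_cons {u v w : ν} (e : ε) (h : ends e = s(u, v)) (p : MWalk ends v w) :
    (cons e v h p).edges = e :: p.edges := rfl
@[simp] lemma support_nil {u : ν} : (nil (ends := ends) u).support = [u] := rfl
@[simp] lemma support_cons {u v w : ν} (e : ε) (h : ends e = s(u, v)) (p : MWalk ends v w) :
    (cons e v h p).support = u :: p.support := rfl

@[simp] lemma edges_append : ∀ {u v w : ν} (p : MWalk ends u v) (q : MWalk ends v w),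
    (p.append q).edges = p.edges ++ q.edges
  | _, _, _, nil _, q => rfl
  | _, _, _, cons e x h p, q => by simp [append, edges_append p q]

lemma support_append : ∀ {u v w : ν} (p : MWalk ends u v) (q : MWalk ends v w),
    (p.append q).support = p.support ++ q.support.tail
  | _, _, _, nil u, q => by
      cases q with
      | nil _ => rfl
      | cons e x h p => rfl
  | _, _, _, cons e x h p, q => by simp [append, support_append p q]

lemma start_mem_support : ∀ {u v : ν} (p : MWalk ends u v), u ∈ p.support
  | _, _, nil _ => by simp
  | _, _, cons e x h p => by simp

lemma end_mem_support : ∀ {u v : ν} (p : MWalk ends u v), v ∈ p.support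
  | _, _, nil _ => by simp
  | _, _, cons e x h p => by simp [end_mem_support p]

lemma edges_reverse : ∀ {u v : ν} (p : MWalk ends u v), p.reverse.edges = p.edges.reverse
  | _, _, nil _ => rfl
  | _, _, cons e x h p => by simp [reverse, edges_reverse p]

lemma support_reverse : ∀ {u v : ν} (p : MWalk ends u v), p.reverse.support = p.support.reverse
  | _, _, nil _ => rfl
  | _, _, cons e x h p => by
      simp [reverse, support_append, support_reverse p]

lemma isPath_reverse {u v : ν} (p : MWalk ends u v) (hp : p.IsPath) : p.reverse.IsPath := by
  unfold IsPath at *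
  rw [support_reverse]
  exact List.nodup_reverse.2 hp

lemma mem_support_of_mem_edges : ∀ {u v : ν} (p : MWalk ends u v) {e : ε} {a b : ν},
    e ∈ p.edges → ends e = s(a, b) → a ∈ p.support
  | _, _, nil _, e, a, b => by simp
  | u, w, cons f x h p, e, a, b => by
      intro he hab
      rcases List.mem_cons.1 he with rfl | he
      · rw [h] at hab
        rw [Sym2.eq_iff] at hab
        rcases hab with ⟨rfl, rfl⟩ | ⟨rfl, rfl⟩
        · simp
        · simp [start_mem_support p]
      · simp [mem_support_of_mem_edges p he hab]

lemma edges_nodup_of_isPath : ∀ {u v : ν} (p : MWalk ends u v), p.IsPath → p.edges.Nodup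
  | _, _, nil _, _ => by simp
  | u, w, cons f x h p, hp => by
      unfold IsPath at hp
      rw [support_cons] at hp
      rw [List.nodup_cons] at hp
      rw [edges_cons, List.nodup_cons]
      refine ⟨fun hf => hp.1 ?_, edges_nodup_of_isPath p hp.2⟩
      exact mem_support_of_mem_edges p hf h

/-- In a path, the only edge incident to the start vertex is the first edge. -/
lemma first_edge_unique : ∀ {u v : ν} (p : MWalk ends u v), p.IsPath →
    ∀ {e : ε} {y : ν}, e ∈ p.edges → ends e = s(u, y) → p.edges.head? = some e
  | _, _, nil _, _, e, y => by simp
  | u, w, cons f x h p, hp, e, y => by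
      intro he hey
      rcases List.mem_cons.1 he with rfl | he
      · rfl
      · exfalso
        unfold IsPath at hp
        rw [support_cons, List.nodup_cons] at hp
        exact hp.1 (mem_support_of_mem_edges p he hey)

/-- Extract a sub-walk from a visited vertex to the end. -/
lemma exists_drop : ∀ {x v : ν} (q : MWalk ends x v) (u : ν), u ∈ q.support →
    ∃ r : MWalk ends u v, (∀ e ∈ r.edges, e ∈ q.edges) ∧ r.support.Sublist q.support
  | _, _, nil x, u => by
      intro hu
      simp at hu
      subst hu
      exact ⟨nil _, by simp, by simp⟩
  | x, v, cons e y h q, u => by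
      intro hu
      rw [support_cons] at hu
      by_cases hux : u = x
      · subst hux
        exact ⟨cons e y h q, fun _ h => h, List.Sublist.refl _⟩
      · rcases List.mem_cons.1 hu with rfl | hu
        · exact absurd rfl hux
        · obtain ⟨r, hr1, hr2⟩ := exists_drop q u hu
          exact ⟨r, fun f hf => List.mem_cons_of_mem _ (hr1 f hf),
            hr2.trans (List.sublist_cons_self _ _)⟩

/-- Every walk contains a path between the same endpoints using a subset of edges. -/
lemma exists_path : ∀ {u v : ν} (p : MWalk ends u v),
    ∃ q : MWalk ends u v, q.IsPath ∧ ∀ e ∈ q.edges, e ∈ p.edges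
  | _, _, nil u => ⟨nil u, by simp [IsPath], by simp⟩
  | u, w, cons f x h p => by
      obtain ⟨q, hq, hqe⟩ := exists_path p
      by_cases hu : u ∈ q.support
      · obtain ⟨r, hr1, hr2⟩ := exists_drop q u hu
        exact ⟨r, (hq.sublist hr2 : _), fun e he => List.mem_cons_of_mem _ (hqe e (hr1 e he))⟩
      · refine ⟨cons f x h q, ?_, ?_⟩
        · unfold IsPath
          rw [support_cons, List.nodup_cons]
          exact ⟨hu, hq⟩
        · intro e he
          rcases List.mem_cons.1 he with rfl | he
          · simp
          · exact List.mem_cons_of_mem _ (hqe e he)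

/-- Parity of the bridge count. -/
lemma bridgeCount_mod_two (sideF : ν → Bool) : ∀ {u v : ν} (p : MWalk ends u v),
    p.bridgeCount sideF % 2 = if sideF u = sideF v then 0 else 1
  | _, _, nil _ => by simp [bridgeCount]
  | u, w, cons f x h p => by
      have ih := bridgeCount_mod_two sideF p
      unfold bridgeCount
      rw [Nat.add_mod, ih]
      cases hu : sideF u <;> cases hx : sideF x <;> cases hw : sideF w <;> simp [hu, hx, hw]

lemma odd_bridgeCount_iff (sideF : ν → Bool) {u v : ν} (p : MWalk ends u v) :
    Odd (p.bridgeCount sideF) ↔ sideF u ≠ sideF v := by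
  rw [Nat.odd_iff, bridgeCount_mod_two]
  by_cases h : sideF u = sideF v <;> simp [h]

end MWalk

set_option linter.unusedSectionVars false

open MWalk

variable {ε ν : Type} [DecidableEq ε] {ends : ε → Sym2 ν}

lemma Reachable.refl (F : Finset ε) (u : ν) : Reachable ends F u u :=
  ⟨MWalk.nil u, by simp [MWalk.edgesIn]⟩

lemma Reachable.symm {F : Finset ε} {u v : ν} (h : Reachable ends F u v) :
    Reachable ends F v u := by
  obtain ⟨p, hp⟩ := h
  exact ⟨p.reverse, by intro e he; rw [edges_reverse, List.mem_reverse] at he; exact hp e he⟩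

lemma Reachable.trans {F : Finset ε} {u v w : ν} (h : Reachable ends F u v)
    (h' : Reachable ends F v w) : Reachable ends F u w := by
  obtain ⟨p, hp⟩ := h
  obtain ⟨q, hq⟩ := h'
  refine ⟨p.append q, ?_⟩
  intro e he
  rw [edges_append, List.mem_append] at he
  exact he.elim (hp e) (hq e)

lemma Reachable.mono {F F' : Finset ε} (hFF : F ⊆ F') {u v : ν}
    (h : Reachable ends F u v) : Reachable ends F' u v := by
  obtain ⟨p, hp⟩ := h
  exact ⟨p, fun e he => hFF (hp e he)⟩

lemma reachable_of_edge {F : Finset ε} {e : ε} {u v : ν} (he : e ∈ F)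
    (h : ends e = s(u, v)) : Reachable ends F u v :=
  ⟨MWalk.cons e v h (MWalk.nil v), by
    intro f hf
    simp only [edges_cons, edges_nil, List.mem_singleton] at hf
    subst hf; exact he⟩

/-- There is always a *path* realizing reachability. -/
lemma Reachable.exists_isPath {F : Finset ε} {u v : ν} (h : Reachable ends F u v) :
    ∃ p : MWalk ends u v, p.IsPath ∧ p.edgesIn F := by
  obtain ⟨p, hp⟩ := h
  obtain ⟨q, hq1, hq2⟩ := MWalk.exists_path p
  exact ⟨q, hq1, fun e he => hp e (hq2 e he)⟩

/-- Removing an edge splits reachability to one of its endpoints. -/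
lemma reach_erase_or_aux {F : Finset ε} : ∀ {w a : ν} (p : MWalk ends w a),
    p.edgesIn F → ∀ {e : ε} {b : ν}, ends e = s(a, b) →
    Reachable ends (F.erase e) w a ∨ Reachable ends (F.erase e) w b
  | _, _, MWalk.nil u, _, e, b => fun _ => Or.inl (Reachable.refl _ _)
  | w, a, MWalk.cons f x hf p, hp, e, b => by
    intro hab
    by_cases hfe : f = e
    · subst hfe
      rw [hab] at hf
      rw [Sym2.eq_iff] at hf
      rcases hf with ⟨rfl, rfl⟩ | ⟨rfl, rfl⟩
      · exact Or.inl (Reachable.refl _ _)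
      · exact Or.inr (Reachable.refl _ _)
    · have hfF : f ∈ F.erase e := Finset.mem_erase.2 ⟨hfe, hp f (by simp)⟩
      have hp' : p.edgesIn F := fun g hg => hp g (by simp [MWalk.edgesIn] at hg ⊢; simp [hg])
      rcases reach_erase_or_aux p hp' hab with h1 | h1
      · exact Or.inl ((reachable_of_edge hfF hf).trans h1)
      · exact Or.inr ((reachable_of_edge hfF hf).trans h1)

lemma reach_erase_or {F : Finset ε} {e : ε} {a b w : ν} (hab : ends e = s(a, b))
    (h : Reachable ends F w a) :
    Reachable ends (F.erase e) w a ∨ Reachable ends (F.erase e) w b := by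
  obtain ⟨p, hp⟩ := h
  exact reach_erase_or_aux p hp hab

/-- A forest contains no loops. -/
lemma no_loops_of_acyclic {F : Finset ε} (hF : IsAcyclic ends F) {e : ε} (he : e ∈ F)
    {a b : ν} (hab : ends e = s(a, b)) : a ≠ b := by
  rintro rfl
  exact hF e he a a hab (Reachable.refl _ _)

/-- In a forest, a vertex reaches exactly one endpoint of an edge after its removal. -/
lemma not_reach_both {F : Finset ε} (hF : IsAcyclic ends F) {e : ε} (he : e ∈ F)
    {a b w : ν} (hab : ends e = s(a, b)) (h1 : Reachable ends (F.erase e) w a)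
    (h2 : Reachable ends (F.erase e) w b) : False :=
  hF e he a b hab (h1.symm.trans h2)

/-- `e` is the edge at `r` pointing towards `t`. -/
def IsTwd (ends : ε → Sym2 ν) (F : Finset ε) (r t : ν) (e : ε) : Prop :=
  e ∈ F ∧ (∃ y, ends e = s(r, y)) ∧ ¬ Reachable ends (F.erase e) r t

lemma isTwd_ne {F : Finset ε} {r t : ν} {e : ε} (h : IsTwd ends F r t e) : r ≠ t := by
  rintro rfl
  exact h.2.2 (Reachable.refl _ _)

/-- The first edge of a path from `r` to `t` is towards `t`. -/
lemma isTwd_of_path {F : Finset ε} (hF : IsAcyclic ends F) {r t : ν}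
    {e : ε} {y : ν} (hey : ends e = s(r, y)) (p : MWalk ends y t)
    (hp : (MWalk.cons e y hey p).IsPath) (hin : (MWalk.cons e y hey p).edgesIn F) :
    IsTwd ends F r t e := by
  have heF : e ∈ F := hin e (by simp)
  refine ⟨heF, ⟨y, hey⟩, ?_⟩
  intro hreach
  -- the tail of the path avoids `e`
  have hnodup := MWalk.edges_nodup_of_isPath _ hp
  rw [edges_cons, List.nodup_cons] at hnodup
  have hyt : Reachable ends (F.erase e) y t := by
    refine ⟨p, fun f hf => Finset.mem_erase.2 ⟨?_, hin f (by simp [hf])⟩⟩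
    rintro rfl
    exact hnodup.1 hf
  exact hF e heF r y hey (hreach.trans hyt.symm)

lemma exists_isTwd {F : Finset ε} (hF : IsAcyclic ends F) {r t : ν} (hrt : r ≠ t)
    (h : Reachable ends F r t) : ∃ e, IsTwd ends F r t e := by
  obtain ⟨p, hp, hin⟩ := h.exists_isPath
  cases p with
  | nil _ => exact absurd rfl hrt
  | cons e y hey p => exact ⟨e, isTwd_of_path hF hey p hp hin⟩

lemma isTwd_unique {F : Finset ε} (hF : IsAcyclic ends F) {r t : ν}
    (hreach : Reachable ends F r t) {e e' : ε}
    (h : IsTwd ends F r t e) (h' : IsTwd ends F r t e') : e = e' := by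
  obtain ⟨p, hp, hin⟩ := hreach.exists_isPath
  have key : ∀ f, IsTwd ends F r t f → p.edges.head? = some f := by
    intro f hf
    obtain ⟨yf, hyf⟩ := hf.2.1
    by_cases hmem : f ∈ p.edges
    · exact MWalk.first_edge_unique p hp hmem hyf
    · exfalso
      refine hf.2.2 ⟨p, fun g hg => Finset.mem_erase.2 ⟨?_, hin g hg⟩⟩
      rintro rfl; exact hmem hg
  have := (key e h).symm.trans (key e' h')
  exact Option.some_injective _ this

/-- The optional edge at `r` towards `t`. -/
def twdO (ends : ε → Sym2 ν) (F : Finset ε) (r t : ν) : Option ε :=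
  if h : Reachable ends F r t ∧ ∃ e, IsTwd ends F r t e then some h.2.choose else none

lemma twdO_eq_some_iff {F : Finset ε} (hF : IsAcyclic ends F) {r t : ν} {e : ε} :
    twdO ends F r t = some e ↔ (Reachable ends F r t ∧ IsTwd ends F r t e) := by
  unfold twdO
  split_ifs with h
  · simp only [Option.some_inj]
    constructor
    · rintro rfl; exact ⟨h.1, h.2.choose_spec⟩
    · intro he; exact isTwd_unique hF h.1 h.2.choose_spec he.2
  · simp only [reduceCtorEq, false_iff]
    exact fun he => h ⟨he.1, e, he.2⟩

lemma twdO_isSome_iff {F : Finset ε} (hF : IsAcyclic ends F) {r t : ν} :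
    (twdO ends F r t).isSome ↔ (r ≠ t ∧ Reachable ends F r t) := by
  constructor
  · intro h
    obtain ⟨e, he⟩ := Option.isSome_iff_exists.1 h
    rw [twdO_eq_some_iff hF] at he
    exact ⟨isTwd_ne he.2, he.1⟩
  · rintro ⟨hrt, hreach⟩
    obtain ⟨e, he⟩ := exists_isTwd hF hrt hreach
    rw [Option.isSome_iff_exists]
    exact ⟨e, (twdO_eq_some_iff hF).2 ⟨hreach, he⟩⟩

/-- The minimum vertex in the component of `v`. -/
def minComp (ends : ε → Sym2 ν) [Fintype ν] [LinearOrder ν] (F : Finset ε) (v : ν) : ν :=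
  (Finset.univ.filter fun w => Reachable ends F v w).min'
    ⟨v, by simp [Reachable.refl]⟩

section MinComp

variable [Fintype ν] [LinearOrder ν] {F : Finset ε}

lemma reach_minComp (v : ν) : Reachable ends F v (minComp ends F v) := by
  have := Finset.min'_mem (Finset.univ.filter fun w => Reachable ends F v w)
    ⟨v, by simp [Reachable.refl]⟩
  simpa [minComp] using this

lemma minComp_le {v w : ν} (h : Reachable ends F v w) : minComp ends F v ≤ w := by
  exact Finset.min'_le _ _ (by simpa using h)

lemma minComp_congr {v w : ν} (h : Reachable ends F v w) :
    minComp ends F v = minComp ends F w := by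
  unfold minComp
  congr 1
  ext x
  simp only [Finset.mem_filter, Finset.mem_univ, true_and]
  exact ⟨fun hx => h.symm.trans hx, fun hx => h.trans hx⟩

end MinComp

set_option linter.unusedSectionVars false

open MWalk

lemma sym2_exists_rep {ν : Type} (x : Sym2 ν) : ∃ a b, x = s(a, b) :=
  Sym2.inductionOn x fun a b => ⟨a, b, rfl⟩

namespace BiconedGraph

variable (P : BiconedGraph)

instance : Fintype (Fin P.m ⊕ₗ Fin P.n) := Fintype.ofEquiv _ (toLex : _ ≃ Fin P.m ⊕ₗ Fin P.n)
instance : Fintype P.Vred := instFintypeOption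
instance : Fintype P.Ered := instFintypeSum _ _

lemma side_bot : P.side (⊥ : P.Vred) = false := rfl

lemma side_coe (x : P.VG) :
    P.side (P.liftV x) = Sum.elim (fun _ => true) (fun _ => false) (ofLex x) := rfl

lemma side_eq_true_iff (v : P.Vred) : P.side v = true ↔ P.InA v := by
  constructor
  · intro h
    cases v with
    | none =>
      have : P.side none = false := rfl
      rw [this] at h
      exact Bool.noConfusion h
    | some x =>
      rcases hx : ofLex x with a | b
      · refine ⟨a, ?_⟩
        have hx2 : x = toLex (Sum.inl a) := by rw [← hx]; rfl
        rw [hx2]; rfl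
      · exfalso
        have : P.side (some x) = false := by
          show Sum.elim (fun _ => true) (fun _ => false) (ofLex x) = false
          rw [hx, Sum.elim_inr]
        rw [this] at h
        exact Bool.noConfusion h
  · rintro ⟨a, rfl⟩
    rfl

/-! ### The forward map: birooted forest → multiplicity function -/

/-- Some other root in the same component, if one exists. -/
def mateO (F : Finset P.Ered) (R : Set P.Vred) (r : P.Vred) : Option P.Vred :=
  if h : ∃ r', r' ∈ R ∧ r' ≠ r ∧ Reachable P.endsRed F r r' then some h.choose else none

/-- The target of a root: its mate if it has one, else the minimum of its component. -/
def targetR (F : Finset P.Ered) (R : Set P.Vred) (r : P.Vred) : P.Vred :=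
  (P.mateO F R r).getD (minComp P.endsRed F r)

/-- The edge carrying the edge root corresponding to a (non-`⊥`) root. -/
def rootEdgeF (F : Finset P.Ered) (R : Set P.Vred) (r : P.Vred) : Option P.Ered :=
  if r ∈ R ∧ r ≠ ⊥ then twdO P.endsRed F r (P.targetR F R r) else none

/-- The forward map on data. -/
def fwdMult (F : Finset P.Ered) (R : Set P.Vred) : P.Ered → ℕ := fun e =>
  if e ∈ F then 1 + (Finset.univ.filter fun r => P.rootEdgeF F R r = some e).card else 0

/-! ### The backward map: multiplicity function → birooted forest -/

/-- `v` is the root recovered from the rooted edge `e`. -/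
def AttachedRoot (mult : P.Ered → ℕ) (v : P.Vred) (e : P.Ered) : Prop :=
  2 ≤ mult e ∧ (∃ u, P.endsRed e = s(v, u)) ∧
  ¬ Reachable P.endsRed ((P.mSupport mult).erase e) v ⊥ ∧
  (∀ f, 2 ≤ mult f → f ≠ e → ∀ w ∈ P.endsRed f,
    ¬ Reachable P.endsRed ((P.mSupport mult).erase e) v w) ∧
  (Reachable P.endsRed (P.mSupport mult) v ⊥ ∨ mult e = 3 ∨
    (∃ f, 2 ≤ mult f ∧ f ≠ e ∧ ∃ w ∈ P.endsRed f, Reachable P.endsRed (P.mSupport mult) v w) ∨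
    ¬ Reachable P.endsRed ((P.mSupport mult).erase e) v
        (minComp P.endsRed (P.mSupport mult) v))

/-- The root set recovered from a multiplicity function. -/
def bwdR (mult : P.Ered → ℕ) : Set P.Vred :=
  {v | v = ⊥ ∨
    (¬ Reachable P.endsRed (P.mSupport mult) v ⊥ ∧ P.compEdgeRoots mult v = 0 ∧
      v = minComp P.endsRed (P.mSupport mult) v) ∨
    (∃ e, P.AttachedRoot mult v e)}

/-! ### Basic lemmas -/

lemma mem_mSupport {mult : P.Ered → ℕ} {e : P.Ered} :
    e ∈ P.mSupport mult ↔ mult e ≠ 0 := by simp [mSupport]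

lemma mSupport_fwdMult (F : Finset P.Ered) (R : Set P.Vred) :
    P.mSupport (P.fwdMult F R) = F := by
  ext e
  rw [mem_mSupport]
  unfold fwdMult
  split_ifs with h <;> simp [h]

lemma fwdMult_of_not_mem {F : Finset P.Ered} {R : Set P.Vred} {e : P.Ered} (h : e ∉ F) :
    P.fwdMult F R e = 0 := by simp [fwdMult, h]

lemma fwdMult_of_mem {F : Finset P.Ered} {R : Set P.Vred} {e : P.Ered} (h : e ∈ F) :
    P.fwdMult F R e = 1 + (Finset.univ.filter fun r => P.rootEdgeF F R r = some e).card := by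
  simp [fwdMult, h]

lemma mateO_spec {F : Finset P.Ered} {R : Set P.Vred} {r r' : P.Vred}
    (h : P.mateO F R r = some r') : r' ∈ R ∧ r' ≠ r ∧ Reachable P.endsRed F r r' := by
  unfold mateO at h
  split_ifs at h with hh
  · obtain rfl : hh.choose = r' := Option.some_injective _ h
    exact hh.choose_spec

lemma mateO_eq_none_iff {F : Finset P.Ered} {R : Set P.Vred} {r : P.Vred} :
    P.mateO F R r = none ↔ ¬ ∃ r', r' ∈ R ∧ r' ≠ r ∧ Reachable P.endsRed F r r' := by
  unfold mateO
  split_ifs with hh <;> simp [hh]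

lemma reach_targetR (F : Finset P.Ered) (R : Set P.Vred) (r : P.Vred) :
    Reachable P.endsRed F r (P.targetR F R r) := by
  unfold targetR
  cases hm : P.mateO F R r with
  | none => simpa using reach_minComp r
  | some r' => simpa using (P.mateO_spec hm).2.2

lemma rootEdgeF_eq_some_iff {F : Finset P.Ered} (hF : IsAcyclic P.endsRed F)
    {R : Set P.Vred} {r : P.Vred} {e : P.Ered} :
    P.rootEdgeF F R r = some e ↔
      (r ∈ R ∧ r ≠ ⊥ ∧ IsTwd P.endsRed F r (P.targetR F R r) e) := by
  unfold rootEdgeF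
  split_ifs with h
  · rw [twdO_eq_some_iff hF]
    constructor
    · rintro ⟨-, ht⟩; exact ⟨h.1, h.2, ht⟩
    · rintro ⟨-, -, ht⟩; exact ⟨P.reach_targetR F R r, ht⟩
  · constructor
    · intro hh; exact absurd hh (by simp)
    · rintro ⟨h1, h2, -⟩; exact absurd ⟨h1, h2⟩ h

lemma rootEdgeF_isSome_iff {F : Finset P.Ered} (hF : IsAcyclic P.endsRed F)
    {R : Set P.Vred} {r : P.Vred} :
    (P.rootEdgeF F R r).isSome ↔ (r ∈ R ∧ r ≠ ⊥ ∧ r ≠ P.targetR F R r) := by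
  unfold rootEdgeF
  split_ifs with h
  · rw [twdO_isSome_iff hF]
    constructor
    · rintro ⟨h1, -⟩; exact ⟨h.1, h.2, h1⟩
    · rintro ⟨-, -, h1⟩; exact ⟨h1, P.reach_targetR F R r⟩
  · simp only [Option.isSome_none, Bool.false_eq_true, false_iff]
    rintro ⟨h1, h2, -⟩; exact h ⟨h1, h2⟩

/-- An edge root's vertex is an endpoint of its edge. -/
lemma rootEdgeF_endpoint {F : Finset P.Ered} (hF : IsAcyclic P.endsRed F)
    {R : Set P.Vred} {r : P.Vred} {e : P.Ered} (h : P.rootEdgeF F R r = some e) :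
    e ∈ F ∧ ∃ y, P.endsRed e = s(r, y) := by
  rw [rootEdgeF_eq_some_iff P hF] at h
  exact ⟨h.2.2.1, h.2.2.2.1⟩

end BiconedGraph

set_option linter.unusedSectionVars false
set_option linter.unusedVariables false

open MWalk

namespace BiconedGraph

variable (P : BiconedGraph)

/-! ### Touching lemmas -/

lemma touches_congr {F : Finset P.Ered} {u v : P.Vred} (h : Reachable P.endsRed F u v)
    {e : P.Ered} : P.Touches F u e ↔ P.Touches F v e := by
  unfold Touches
  constructor
  · rintro ⟨w, hw, hr⟩; exact ⟨w, hw, h.symm.trans hr⟩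
  · rintro ⟨w, hw, hr⟩; exact ⟨w, hw, h.trans hr⟩

lemma reach_of_touches {F : Finset P.Ered} {v : P.Vred} {e : P.Ered} (heF : e ∈ F)
    (h : P.Touches F v e) {w : P.Vred} (hw : w ∈ P.endsRed e) :
    Reachable P.endsRed F v w := by
  obtain ⟨u, hu, hr⟩ := h
  obtain ⟨a, b, hab⟩ := sym2_exists_rep (P.endsRed e)
  have hreach_ab : Reachable P.endsRed F a b := reachable_of_edge heF hab
  rw [hab, Sym2.mem_iff] at hu hw
  rcases hu with rfl | rfl <;> rcases hw with rfl | rfl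
  · exact hr
  · exact hr.trans hreach_ab
  · exact hr.trans hreach_ab.symm
  · exact hr

lemma touches_of_mem {F : Finset P.Ered} {v w : P.Vred} {e : P.Ered}
    (hw : w ∈ P.endsRed e) (h : Reachable P.endsRed F v w) : P.Touches F v e :=
  ⟨w, hw, h⟩

/-! ### `Tset`: the rooted edges meeting a component -/

/-- The set of rooted edges in the component of `v`. -/
def Tset (mult : P.Ered → ℕ) (v : P.Vred) : Finset P.Ered :=
  (P.mSupport mult).filter fun e => 2 ≤ mult e ∧ P.Touches (P.mSupport mult) v e

lemma mem_Tset {mult : P.Ered → ℕ} {v : P.Vred} {e : P.Ered} :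
    e ∈ P.Tset mult v ↔ 2 ≤ mult e ∧ P.Touches (P.mSupport mult) v e := by
  unfold Tset
  simp only [Finset.mem_filter, P.mem_mSupport, and_iff_right_iff_imp]
  rintro ⟨h1, -⟩
  omega

lemma Tset_congr {mult : P.Ered → ℕ} {u v : P.Vred}
    (h : Reachable P.endsRed (P.mSupport mult) u v) : P.Tset mult u = P.Tset mult v := by
  ext e
  rw [mem_Tset, mem_Tset, touches_congr P h]

lemma compEdgeRoots_eq_sum (mult : P.Ered → ℕ) (v : P.Vred) :
    P.compEdgeRoots mult v = ∑ e ∈ P.Tset mult v, (mult e - 1) := by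
  unfold compEdgeRoots
  rw [← Finset.sum_filter]
  apply (Finset.sum_subset _ _).symm
  · intro e he
    rw [mem_Tset] at he
    rw [Finset.mem_filter]
    exact ⟨(P.mem_mSupport).2 (by omega), he.2⟩
  · intro e he hne
    rw [Finset.mem_filter, P.mem_mSupport] at he
    rw [mem_Tset] at hne
    have : ¬ 2 ≤ mult e := fun h => hne ⟨h, he.2⟩
    omega

lemma compEdgeRoots_congr {mult : P.Ered → ℕ} {u v : P.Vred}
    (h : Reachable P.endsRed (P.mSupport mult) u v) :
    P.compEdgeRoots mult u = P.compEdgeRoots mult v := by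
  rw [compEdgeRoots_eq_sum, compEdgeRoots_eq_sum, Tset_congr P h]

lemma compCount_congr {mult : P.Ered → ℕ} {u v : P.Vred}
    (h : Reachable P.endsRed (P.mSupport mult) u v) :
    P.compCount mult u = P.compCount mult v := by
  unfold compCount
  rw [compEdgeRoots_congr P h]
  congr 1
  by_cases hb : Reachable P.endsRed (P.mSupport mult) v ⊥
  · rw [if_pos (h.trans hb), if_pos hb]
  · rw [if_neg (fun hc => hb (h.symm.trans hc)), if_neg hb]

lemma card_Tset_le (mult : P.Ered → ℕ) (v : P.Vred) :
    (P.Tset mult v).card ≤ P.compEdgeRoots mult v := by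
  rw [compEdgeRoots_eq_sum]
  calc (P.Tset mult v).card = ∑ e ∈ P.Tset mult v, 1 := by simp
  _ ≤ ∑ e ∈ P.Tset mult v, (mult e - 1) := by
      apply Finset.sum_le_sum
      intro e he
      rw [mem_Tset] at he
      omega

lemma Tset_eq_empty_of_zero {mult : P.Ered → ℕ} {v : P.Vred}
    (h : P.compEdgeRoots mult v = 0) : P.Tset mult v = ∅ := by
  have := P.card_Tset_le mult v
  rw [h, Nat.le_zero, Finset.card_eq_zero] at this
  exact this

lemma Tset_structure_one {mult : P.Ered → ℕ} {v : P.Vred}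
    (h : P.compEdgeRoots mult v = 1) :
    ∃ e, P.Tset mult v = {e} ∧ mult e = 2 := by
  have hle := P.card_Tset_le mult v
  rw [h] at hle
  have hsum := (P.compEdgeRoots_eq_sum mult v).symm.trans h
  interval_cases hc : (P.Tset mult v).card
  · rw [Finset.card_eq_zero] at hc
    rw [hc] at hsum
    simp at hsum
  · rw [Finset.card_eq_one] at hc
    obtain ⟨e, he⟩ := hc
    refine ⟨e, he, ?_⟩
    rw [he, Finset.sum_singleton] at hsum
    have h2 : 2 ≤ mult e := ((P.mem_Tset).1 (he ▸ Finset.mem_singleton_self e)).1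
    omega

lemma Tset_structure_two {mult : P.Ered → ℕ} {v : P.Vred}
    (h : P.compEdgeRoots mult v = 2) :
    (∃ e, P.Tset mult v = {e} ∧ mult e = 3) ∨
    (∃ e f, e ≠ f ∧ P.Tset mult v = {e, f} ∧ mult e = 2 ∧ mult f = 2) := by
  have hle := P.card_Tset_le mult v
  rw [h] at hle
  have hsum := (P.compEdgeRoots_eq_sum mult v).symm.trans h
  interval_cases hc : (P.Tset mult v).card
  · rw [Finset.card_eq_zero] at hc
    rw [hc] at hsum
    simp at hsum
  · rw [Finset.card_eq_one] at hc
    obtain ⟨e, he⟩ := hc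
    refine Or.inl ⟨e, he, ?_⟩
    rw [he, Finset.sum_singleton] at hsum
    have h2 : 2 ≤ mult e := ((P.mem_Tset).1 (he ▸ Finset.mem_singleton_self e)).1
    omega
  · rw [Finset.card_eq_two] at hc
    obtain ⟨e, f, hef, hc⟩ := hc
    refine Or.inr ⟨e, f, hef, hc, ?_⟩
    rw [hc, Finset.sum_pair hef] at hsum
    have h2 : 2 ≤ mult e := ((P.mem_Tset).1 (hc ▸ by simp : e ∈ P.Tset mult v)).1
    have h3 : 2 ≤ mult f := ((P.mem_Tset).1 (hc ▸ by simp : f ∈ P.Tset mult v)).1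
    omega

/-! ### First/last edges of paths -/

lemma head_isTwd {F : Finset P.Ered} (hF : IsAcyclic P.endsRed F) {r t : P.Vred}
    (p : MWalk P.endsRed r t) (hp : p.IsPath) (hin : p.edgesIn F) (hrt : r ≠ t) :
    ∃ e, p.edges.head? = some e ∧ IsTwd P.endsRed F r t e := by
  cases p with
  | nil _ => exact absurd rfl hrt
  | cons e y hey p => exact ⟨e, rfl, isTwd_of_path hF hey p hp hin⟩

lemma last_isTwd {F : Finset P.Ered} (hF : IsAcyclic P.endsRed F) {r t : P.Vred}
    (p : MWalk P.endsRed r t) (hp : p.IsPath) (hin : p.edgesIn F) (hrt : r ≠ t) :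
    ∃ e, p.edges.getLast? = some e ∧ IsTwd P.endsRed F t r e := by
  obtain ⟨e, he1, he2⟩ := head_isTwd P hF p.reverse (isPath_reverse p hp)
    (fun f hf => hin f (by rwa [edges_reverse, List.mem_reverse] at hf)) (Ne.symm hrt)
  refine ⟨e, ?_, he2⟩
  rw [edges_reverse] at he1
  rwa [← List.head?_reverse]

/-! ### The counting lemma for the forward map -/

lemma compEdgeRoots_fwdMult {F : Finset P.Ered} (hF : IsAcyclic P.endsRed F)
    (R : Set P.Vred) (v : P.Vred) :
    P.compEdgeRoots (P.fwdMult F R) v =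
      (Finset.univ.filter fun r =>
        (P.rootEdgeF F R r).isSome ∧ Reachable P.endsRed F v r).card := by
  have hsupp := P.mSupport_fwdMult F R
  unfold compEdgeRoots
  rw [hsupp]
  rw [← Finset.sum_filter]
  -- turn the sum of fiber cards into the card of a union
  have hfib : ∀ e ∈ F.filter (fun e => P.Touches F v e),
      P.fwdMult F R e - 1 = (Finset.univ.filter fun r => P.rootEdgeF F R r = some e).card := by
    intro e he
    rw [Finset.mem_filter] at he
    rw [P.fwdMult_of_mem he.1]
    omega
  rw [Finset.sum_congr rfl hfib]
  rw [← Finset.card_biUnion]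
  · congr 1
    ext r
    simp only [Finset.mem_biUnion, Finset.mem_filter, Finset.mem_univ, true_and]
    constructor
    · rintro ⟨e, ⟨heF, htouch⟩, hre⟩
      refine ⟨by rw [hre]; rfl, ?_⟩
      obtain ⟨-, y, hy⟩ := P.rootEdgeF_endpoint hF hre
      exact P.reach_of_touches heF htouch (by rw [hy]; exact Sym2.mem_mk_left _ _)
    · rintro ⟨hsome, hreach⟩
      obtain ⟨e, he⟩ := Option.isSome_iff_exists.1 hsome
      obtain ⟨heF, y, hy⟩ := P.rootEdgeF_endpoint hF he
      refine ⟨e, ⟨heF, P.touches_of_mem (by rw [hy]; exact Sym2.mem_mk_left _ _) hreach⟩, he⟩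
  · intro e he f hf hef
    simp only [Finset.disjoint_left, Finset.mem_filter, Finset.mem_univ, true_and]
    rintro r hre hrf
    exact hef (Option.some_injective _ (hre.symm.trans hrf))

/-! ### Roots in a component of a birooted forest -/

variable {P}

/-- In a birooted forest, if a component has two distinct roots, every root of the
component is one of them. -/
lemma roots_pair_closed {F : Finset P.Ered} {R : Set P.Vred}
    (hBR : P.IsBirootedForest F R) {v r1 r2 r3 : P.Vred}
    (h1 : r1 ∈ R) (h2 : r2 ∈ R) (h3 : r3 ∈ R) (h12 : r1 ≠ r2)
    (hv1 : Reachable P.endsRed F v r1) (hv2 : Reachable P.endsRed F v r2)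
    (hv3 : Reachable P.endsRed F v r3) : r3 = r1 ∨ r3 = r2 := by
  by_contra hc
  push_neg at hc
  exact hBR.2.2.2.1 r1 h1 r2 h2 r3 h3 h12 (Ne.symm hc.1) (Ne.symm hc.2)
    (hv1.symm.trans hv2) (hv1.symm.trans hv3)

/-- If a root has a companion root in its component, `mateO` returns exactly it. -/
lemma mateO_eq_of_birooted {F : Finset P.Ered} {R : Set P.Vred}
    (hBR : P.IsBirootedForest F R) {r r' : P.Vred} (hr : r ∈ R) (hr' : r' ∈ R)
    (hne : r' ≠ r) (hreach : Reachable P.endsRed F r r') :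
    P.mateO F R r = some r' := by
  cases hm : P.mateO F R r with
  | none =>
    rw [P.mateO_eq_none_iff] at hm
    exact absurd ⟨r', hr', hne, hreach⟩ hm
  | some m =>
    obtain ⟨hmR, hmne, hmreach⟩ := P.mateO_spec hm
    rcases roots_pair_closed hBR hr' hr hmR hne hreach (Reachable.refl _ _) hmreach with h | h
    · rw [h]
    · exact absurd h hmne

lemma mateO_eq_none_of_lone {F : Finset P.Ered} {R : Set P.Vred}
    {r : P.Vred} (hlone : ∀ r' ∈ R, Reachable P.endsRed F r r' → r' = r) :
    P.mateO F R r = none := by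
  rw [P.mateO_eq_none_iff]
  rintro ⟨r', hr', hne, hreach⟩
  exact hne (hlone r' hr' hreach)

end BiconedGraph

set_option linter.unusedSectionVars false
set_option linter.unusedVariables false

open MWalk

namespace BiconedGraph

variable {P : BiconedGraph} {F : Finset P.Ered} {R : Set P.Vred}

lemma bot_not_inA : ¬ P.InA (⊥ : P.Vred) := by
  intro h
  have := (P.side_eq_true_iff ⊥).2 h
  rw [P.side_bot] at this
  exact Bool.noConfusion this

/-- The two roots of a doubly-rooted component have different sides. -/
lemma side_ne_of_pair (hBR : P.IsBirootedForest F R) {r1 r2 : P.Vred}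
    (h1 : r1 ∈ R) (h2 : r2 ∈ R) (hne : r1 ≠ r2) (hreach : Reachable P.endsRed F r1 r2) :
    P.side r1 ≠ P.side r2 := by
  rcases hBR.2.2.2.2.2 r1 h1 r2 h2 hne hreach with ⟨ha, hb⟩ | ⟨ha, hb⟩ <;>
  · have h1' := P.side_eq_true_iff r1
    have h2' := P.side_eq_true_iff r2
    intro hc
    cases hs : P.side r1 <;> rw [hs] at hc h1' <;> rw [← hc] at h2' <;> simp_all

lemma targetR_eq_of_pair (hBR : P.IsBirootedForest F R) {r r' : P.Vred} (hr : r ∈ R)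
    (hr' : r' ∈ R) (hne : r' ≠ r) (hreach : Reachable P.endsRed F r r') :
    P.targetR F R r = r' := by
  unfold targetR
  rw [mateO_eq_of_birooted hBR hr hr' hne hreach]
  rfl

/-- The set of roots counted by `compEdgeRoots` for the forward map. -/
lemma fwd_S_mem (hF : IsAcyclic P.endsRed F) {v r : P.Vred} :
    r ∈ (Finset.univ.filter fun r =>
        (P.rootEdgeF F R r).isSome ∧ Reachable P.endsRed F v r) ↔
      (r ∈ R ∧ r ≠ ⊥ ∧ r ≠ P.targetR F R r ∧ Reachable P.endsRed F v r) := by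
  simp only [Finset.mem_filter, Finset.mem_univ, true_and, P.rootEdgeF_isSome_iff hF]
  tauto

/-- In the component of `⊥`, the counted set has at most one element. -/
lemma fwd_S_card_le_bot (hBR : P.IsBirootedForest F R) {v : P.Vred}
    (hb : Reachable P.endsRed F v ⊥) :
    (Finset.univ.filter fun r =>
        (P.rootEdgeF F R r).isSome ∧ Reachable P.endsRed F v r).card ≤ 1 := by
  apply Finset.card_le_one.2
  intro a ha b hb'
  rw [fwd_S_mem hBR.1] at ha hb'
  by_contra hab
  rcases roots_pair_closed hBR ha.1 hb'.1 hBR.2.1 hab ha.2.2.2 hb'.2.2.2 hb with h | h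
  · exact ha.2.1 h.symm
  · exact hb'.2.1 h.symm

lemma fwd_S_card_le_two (hBR : P.IsBirootedForest F R) (v : P.Vred) :
    (Finset.univ.filter fun r =>
        (P.rootEdgeF F R r).isSome ∧ Reachable P.endsRed F v r).card ≤ 2 := by
  by_contra hc
  push_neg at hc
  rw [Finset.two_lt_card_iff] at hc
  obtain ⟨a, b, c, ha, hb, hc', hab, hac, hbc⟩ := hc
  rw [fwd_S_mem hBR.1] at ha hb hc'
  rcases roots_pair_closed hBR ha.1 hb.1 hc'.1 hab ha.2.2.2 hb.2.2.2 hc'.2.2.2 with h | h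
  · exact hac h.symm
  · exact hbc h.symm

lemma fwd_compCount (hBR : P.IsBirootedForest F R) (v : P.Vred) :
    P.compCount (P.fwdMult F R) v =
      (Finset.univ.filter fun r =>
        (P.rootEdgeF F R r).isSome ∧ Reachable P.endsRed F v r).card +
      (if Reachable P.endsRed F v ⊥ then 1 else 0) := by
  unfold compCount
  rw [P.compEdgeRoots_fwdMult hBR.1, P.mSupport_fwdMult]

/-- A root different from `⊥` hanging in the component of `⊥` has an edge. -/
lemma fwd_rootEdge_isSome_of_bot (hBR : P.IsBirootedForest F R) {r : P.Vred}
    (hr : r ∈ R) (hrb : r ≠ ⊥) (hreach : Reachable P.endsRed F r ⊥) :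
    P.targetR F R r = ⊥ :=
  targetR_eq_of_pair hBR hr hBR.2.1 (Ne.symm hrb) hreach

lemma fwdMult_le_two_of_rootEdge (hF : IsAcyclic P.endsRed F) {r : P.Vred} {e : P.Ered}
    (h : P.rootEdgeF F R r = some e) : 2 ≤ P.fwdMult F R e := by
  have he := (P.rootEdgeF_endpoint hF h).1
  rw [P.fwdMult_of_mem he]
  have : 0 < (Finset.univ.filter fun r' => P.rootEdgeF F R r' = some e).card :=
    Finset.card_pos.2 ⟨r, by simp [h]⟩
  omega

/-- Main theorem, part 1: the forward map produces a 2-edge-rooted forest. -/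
theorem fwd_is2ERF (hBR : P.IsBirootedForest F R) : P.Is2ERF (P.fwdMult F R) := by
  have hF : IsAcyclic P.endsRed F := hBR.1
  have hsupp := P.mSupport_fwdMult F R
  refine ⟨by rw [hsupp]; exact hF, ?_, ?_, ?_⟩
  · -- compCount ≤ 2
    intro v
    rw [fwd_compCount hBR]
    by_cases hb : Reachable P.endsRed F v ⊥
    · have := fwd_S_card_le_bot hBR hb
      simp only [hb, if_true]
      omega
    · have := fwd_S_card_le_two hBR v
      simp only [hb, if_false]
      omega
  · -- uniqueness of the doubly-rooted component
    intro u v hu hv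
    rw [hsupp]
    rw [fwd_compCount hBR] at hu hv
    -- extract a pair of distinct roots in each component
    have pair : ∀ w : P.Vred,
        (Finset.univ.filter fun r =>
          (P.rootEdgeF F R r).isSome ∧ Reachable P.endsRed F w r).card +
          (if Reachable P.endsRed F w ⊥ then 1 else 0) = 2 →
        ∃ a b : P.Vred, a ∈ R ∧ b ∈ R ∧ a ≠ b ∧
          Reachable P.endsRed F w a ∧ Reachable P.endsRed F w b := by
      intro w hw
      by_cases hb : Reachable P.endsRed F w ⊥
      · rw [if_pos hb] at hw
        have h1 : (Finset.univ.filter fun r =>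
            (P.rootEdgeF F R r).isSome ∧ Reachable P.endsRed F w r).card = 1 := by omega
        obtain ⟨a, ha⟩ := Finset.card_eq_one.1 h1
        have haS : a ∈ (Finset.univ.filter fun r =>
            (P.rootEdgeF F R r).isSome ∧ Reachable P.endsRed F w r) := by
          rw [ha]; exact Finset.mem_singleton_self a
        rw [fwd_S_mem hF] at haS
        exact ⟨a, ⊥, haS.1, hBR.2.1, haS.2.1, haS.2.2.2, hb⟩
      · rw [if_neg hb] at hw
        have h1 : (Finset.univ.filter fun r =>
            (P.rootEdgeF F R r).isSome ∧ Reachable P.endsRed F w r).card = 2 := by omega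
        obtain ⟨a, b, hab, hset⟩ := Finset.card_eq_two.1 h1
        have haS : a ∈ (Finset.univ.filter fun r =>
            (P.rootEdgeF F R r).isSome ∧ Reachable P.endsRed F w r) := by
          rw [hset]; simp
        have hbS : b ∈ (Finset.univ.filter fun r =>
            (P.rootEdgeF F R r).isSome ∧ Reachable P.endsRed F w r) := by
          rw [hset]; simp
        rw [fwd_S_mem hF] at haS hbS
        exact ⟨a, b, haS.1, hbS.1, hab, haS.2.2.2, hbS.2.2.2⟩
    obtain ⟨a, b, haR, hbR, hab, hua, hub⟩ := pair u hu
    obtain ⟨c, d, hcR, hdR, hcd, hvc, hvd⟩ := pair v hv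
    have := hBR.2.2.2.2.1 a haR b hbR c hcR d hdR hab hcd
      (hua.symm.trans hub) (hvc.symm.trans hvd)
    exact hua.trans (this.trans hvc.symm)
  · -- C3
    intro v hv
    rw [fwd_compCount hBR] at hv
    constructor
    · -- component of ⊥
      rw [hsupp]
      intro hb
      rw [if_pos hb] at hv
      have h1 : (Finset.univ.filter fun r =>
          (P.rootEdgeF F R r).isSome ∧ Reachable P.endsRed F v r).card = 1 := by omega
      obtain ⟨x, hx⟩ := Finset.card_eq_one.1 h1
      have hxS : x ∈ (Finset.univ.filter fun r =>
          (P.rootEdgeF F R r).isSome ∧ Reachable P.endsRed F v r) := by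
        rw [hx]; exact Finset.mem_singleton_self x
      rw [fwd_S_mem hF] at hxS
      obtain ⟨hxR, hxb, hxt, hxv⟩ := hxS
      -- x is a root ≠ ⊥ in the component of ⊥
      have hxbot : Reachable P.endsRed F x ⊥ := hxv.symm.trans hb
      have htarget : P.targetR F R x = ⊥ := fwd_rootEdge_isSome_of_bot hBR hxR hxb hxbot
      -- a path from ⊥ to x
      obtain ⟨p, hp, hpin⟩ := hxbot.symm.exists_isPath
      obtain ⟨e, helast, heTwd⟩ := last_isTwd P hF p hp hpin (Ne.symm hxb)
      have hre : P.rootEdgeF F R x = some e := by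
        rw [P.rootEdgeF_eq_some_iff hF]
        rw [htarget]
        exact ⟨hxR, hxb, heTwd⟩
      refine ⟨x, p, hp, hpin, ⟨e, helast, ?_⟩, ?_⟩
      · exact fwdMult_le_two_of_rootEdge hF hre
      · rw [odd_bridgeCount_iff]
        have := side_ne_of_pair hBR hBR.2.1 hxR (Ne.symm hxb) hxbot.symm
        exact this
    · rw [hsupp]
      intro hb
      rw [if_neg hb] at hv
      have h1 : (Finset.univ.filter fun r =>
          (P.rootEdgeF F R r).isSome ∧ Reachable P.endsRed F v r).card = 2 := by omega
      obtain ⟨x, y, hxy, hset⟩ := Finset.card_eq_two.1 h1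
      have hxS : x ∈ (Finset.univ.filter fun r =>
          (P.rootEdgeF F R r).isSome ∧ Reachable P.endsRed F v r) := by rw [hset]; simp
      have hyS : y ∈ (Finset.univ.filter fun r =>
          (P.rootEdgeF F R r).isSome ∧ Reachable P.endsRed F v r) := by rw [hset]; simp
      rw [fwd_S_mem hF] at hxS hyS
      obtain ⟨hxR, hxb, hxt, hxv⟩ := hxS
      obtain ⟨hyR, hyb, hyt, hyv⟩ := hyS
      have hxyreach : Reachable P.endsRed F x y := hxv.symm.trans hyv
      have htx : P.targetR F R x = y := targetR_eq_of_pair hBR hxR hyR (Ne.symm hxy) hxyreach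
      have hty : P.targetR F R y = x := targetR_eq_of_pair hBR hyR hxR hxy hxyreach.symm
      obtain ⟨p, hp, hpin⟩ := hxyreach.exists_isPath
      obtain ⟨e1, hehead, heTwd⟩ := head_isTwd P hF p hp hpin hxy
      obtain ⟨e2, helast, heTwd2⟩ := last_isTwd P hF p hp hpin hxy
      have hre1 : P.rootEdgeF F R x = some e1 := by
        rw [P.rootEdgeF_eq_some_iff hF, htx]; exact ⟨hxR, hxb, heTwd⟩
      have hre2 : P.rootEdgeF F R y = some e2 := by
        rw [P.rootEdgeF_eq_some_iff hF, hty]; exact ⟨hyR, hyb, heTwd2⟩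
      refine ⟨x, y, p, hp, hpin, hxv, ⟨e1, hehead, ?_⟩, ⟨e2, helast, ?_⟩, ?_, ?_⟩
      · exact fwdMult_le_two_of_rootEdge hF hre1
      · exact fwdMult_le_two_of_rootEdge hF hre2
      · -- singleton case: mult = 3
        intro e hedges
        have he1 : e1 = e := by
          have : p.edges.head? = some e := by rw [hedges]; rfl
          exact Option.some_injective _ (hehead.symm.trans this)
        have he2 : e2 = e := by
          have : p.edges.getLast? = some e := by rw [hedges]; rfl
          exact Option.some_injective _ (helast.symm.trans this)
        subst he1
        -- the fiber of e1 is exactly {x, y}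
        have heF : e1 ∈ F := heTwd.1
        rw [P.fwdMult_of_mem heF]
        have hfib : (Finset.univ.filter fun r => P.rootEdgeF F R r = some e1) = {x, y} := by
          ext r
          simp only [Finset.mem_filter, Finset.mem_univ, true_and, Finset.mem_insert,
            Finset.mem_singleton]
          constructor
          · intro hr
            obtain ⟨-, z, hz⟩ := P.rootEdgeF_endpoint hF hr
            have hrR : r ∈ R := ((P.rootEdgeF_eq_some_iff hF).1 hr).1
            have hrv : Reachable P.endsRed F v r := by
              have : Reachable P.endsRed F x r := by
                obtain ⟨z0, hz0⟩ := heTwd.2.1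
                have hreach0 : Reachable P.endsRed F r x := by
                  have h1 : Reachable P.endsRed F r z := reachable_of_edge heF hz
                  have h2 : Reachable P.endsRed F x z0 := reachable_of_edge heF hz0
                  -- r and x are both endpoints of e1
                  rw [hz0] at hz
                  rw [Sym2.eq_iff] at hz
                  rcases hz with ⟨rfl, rfl⟩ | ⟨rfl, rfl⟩
                  · exact Reachable.refl _ _
                  · exact h2.symm
                exact hreach0.symm
              exact hxv.trans this
            rcases roots_pair_closed hBR hxR hyR hrR hxy hxv hyv hrv with h | h
            · exact Or.inl h
            · exact Or.inr h
          · rintro (rfl | rfl)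
            · exact hre1
            · rw [hre2, he2]
        rw [hfib, Finset.card_insert_of_notMem (by simp [hxy]), Finset.card_singleton]
      · rw [odd_bridgeCount_iff]
        exact side_ne_of_pair hBR hxR hyR hxy hxyreach

end BiconedGraph

set_option linter.unusedSectionVars false
set_option linter.unusedVariables false

open MWalk

/-- A list with equal head and last elements and no duplicates is a singleton. -/
lemma list_singleton_of_head_last {α : Type} {l : List α} {e : α} (hnd : l.Nodup)
    (hh : l.head? = some e) (hl : l.getLast? = some e) : l = [e] := by
  cases l with
  | nil => exact absurd hh (by simp)
  | cons a t =>
    have ha : a = e := by simpa using hh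
    subst ha
    cases t with
    | nil => rfl
    | cons b t' =>
      exfalso
      have hlast : (b :: t').getLast? = some a := by
        rw [List.getLast?_cons_cons] at hl
        exact hl
      have hmem : a ∈ b :: t' := by
        obtain ⟨hne, heq⟩ := List.mem_getLast?_eq_getLast (l := b :: t') (x := a) hlast
        rw [heq]
        exact List.getLast_mem hne
      rw [List.nodup_cons] at hnd
      exact hnd.1 hmem

namespace MWalk

variable {ε ν : Type} {ends : ε → Sym2 ν}

lemma ne_of_edges_ne_nil {u v : ν} (p : MWalk ends u v) (hp : p.IsPath)
    (hne : p.edges ≠ []) : u ≠ v := by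
  cases p with
  | nil _ => exact absurd rfl hne
  | cons e x h p =>
    rintro rfl
    unfold IsPath at hp
    rw [support_cons, List.nodup_cons] at hp
    exact hp.1 (end_mem_support p)

end MWalk

namespace BiconedGraph

variable {P : BiconedGraph} {mult : P.Ered → ℕ}

/-- One endpoint of a forest edge is cut off from a base vertex of its component. -/
lemma farEnd_exists {F : Finset P.Ered} (hF : IsAcyclic P.endsRed F) {e : P.Ered}
    (heF : e ∈ F) {w : P.Vred} (ht : P.Touches F w e) :
    ∃ x u, P.endsRed e = s(x, u) ∧ ¬ Reachable P.endsRed (F.erase e) x w ∧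
      Reachable P.endsRed (F.erase e) u w := by
  obtain ⟨a, b, hab⟩ := sym2_exists_rep (P.endsRed e)
  have hwa : Reachable P.endsRed F w a :=
    P.reach_of_touches heF ht (by rw [hab]; exact Sym2.mem_mk_left _ _)
  rcases reach_erase_or hab hwa with h | h
  · exact ⟨b, a, by rw [hab, Sym2.eq_swap], fun hc => not_reach_both hF heF hab h hc.symm, h.symm⟩
  · exact ⟨a, b, hab, fun hc => not_reach_both hF heF hab hc.symm h, h.symm⟩

/-- The far endpoint is unique. -/
lemma farEnd_unique {F : Finset P.Ered} (hF : IsAcyclic P.endsRed F) {e : P.Ered}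
    (heF : e ∈ F) {w x x' u u' : P.Vred} (ht : P.Touches F w e)
    (hx : P.endsRed e = s(x, u)) (hnr : ¬ Reachable P.endsRed (F.erase e) x w)
    (hx' : P.endsRed e = s(x', u')) (hnr' : ¬ Reachable P.endsRed (F.erase e) x' w) :
    x = x' := by
  rw [hx] at hx'
  rw [Sym2.eq_iff] at hx'
  rcases hx' with ⟨rfl, rfl⟩ | ⟨rfl, rfl⟩
  · rfl
  · -- x' = u, u' = x : both endpoints cut off from w, contradiction
    exfalso
    have hwx : Reachable P.endsRed F w x :=
      P.reach_of_touches heF ht (by rw [hx]; exact Sym2.mem_mk_left _ _)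
    rcases reach_erase_or hx hwx with h | h
    · exact hnr h.symm
    · exact hnr' h.symm

lemma attached_ne_bot {v : P.Vred} {e : P.Ered} (h : P.AttachedRoot mult v e) :
    v ≠ ⊥ := by
  rintro rfl
  exact h.2.2.1 (Reachable.refl _ _)

lemma attached_mem_supp {v : P.Vred} {e : P.Ered} (h : P.AttachedRoot mult v e) :
    e ∈ P.mSupport mult := P.mem_mSupport.2 (by have := h.1; omega)

lemma attached_mem_Tset {v w : P.Vred} {e : P.Ered} (h : P.AttachedRoot mult v e)
    (hreach : Reachable P.endsRed (P.mSupport mult) w v) : e ∈ P.Tset mult w := by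
  rw [mem_Tset]
  obtain ⟨u, hu⟩ := h.2.1
  exact ⟨h.1, P.touches_of_mem (by rw [hu]; exact Sym2.mem_mk_left _ _) hreach⟩

lemma attached_reach {v w : P.Vred} {e : P.Ered} (h : P.AttachedRoot mult v e) :
    Reachable P.endsRed (P.mSupport mult) v v := Reachable.refl _ _

/-- From an attached root we can reach all endpoints of its edge. -/
lemma attached_endpoint_reach {v : P.Vred} {e : P.Ered} (h : P.AttachedRoot mult v e)
    {w : P.Vred} (hw : w ∈ P.endsRed e) :
    Reachable P.endsRed (P.mSupport mult) v w := by
  obtain ⟨u, hu⟩ := h.2.1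
  exact P.reach_of_touches (attached_mem_supp h)
    (P.touches_of_mem (by rw [hu]; exact Sym2.mem_mk_left _ _) (Reachable.refl _ _)) hw

lemma single_le_compEdgeRoots {v : P.Vred} {e : P.Ered} (he : e ∈ P.Tset mult v) :
    mult e - 1 ≤ P.compEdgeRoots mult v := by
  rw [compEdgeRoots_eq_sum]
  exact Finset.single_le_sum (f := fun f => mult f - 1) (fun _ _ => Nat.zero_le _) he

lemma compEdgeRoots_le_compCount (v : P.Vred) :
    P.compEdgeRoots mult v ≤ P.compCount mult v := by
  unfold compCount
  omega

/-- **Key uniqueness lemma.**  Two distinct roots attached to the same edge force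
multiplicity 3. -/
lemma attached_unique (h2 : P.Is2ERF mult) {v v' : P.Vred} {e : P.Ered}
    (h : P.AttachedRoot mult v e) (h' : P.AttachedRoot mult v' e) (hne : v ≠ v') :
    mult e = 3 ∧ P.endsRed e = s(v, v') := by
  have hF : IsAcyclic P.endsRed (P.mSupport mult) := h2.1
  have heF : e ∈ P.mSupport mult := attached_mem_supp h
  obtain ⟨u, hu⟩ := h.2.1
  obtain ⟨u', hu'⟩ := h'.2.1
  -- the edge has endpoints exactly v and v'
  have hvv' : P.endsRed e = s(v, v') := by
    rw [hu] at hu'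
    rw [Sym2.eq_iff] at hu'
    rcases hu' with ⟨rfl, rfl⟩ | ⟨rfl, rfl⟩
    · exact absurd rfl hne
    · exact hu
  have hreach_vv' : Reachable P.endsRed (P.mSupport mult) v v' :=
    reachable_of_edge heF hvv'
  have hmult : mult e ≤ 3 := by
    have h1 : mult e - 1 ≤ P.compEdgeRoots mult v :=
      single_le_compEdgeRoots (attached_mem_Tset h (Reachable.refl _ _))
    have h3 := h2.2.1 v
    have := compEdgeRoots_le_compCount (mult := mult) v
    have h4 := h.1
    omega
  refine ⟨?_, hvv'⟩
  by_contra hm3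
  have hm2 : mult e = 2 := by have := h.1; omega
  -- case analysis on the component
  by_cases hb : Reachable P.endsRed (P.mSupport mult) v ⊥
  · rcases reach_erase_or hvv' hb.symm with hc | hc
    · exact h.2.2.1 hc.symm
    · exact h'.2.2.1 hc.symm
  · -- not the ⊥ component
    have hb' : ¬ Reachable P.endsRed (P.mSupport mult) v' ⊥ :=
      fun hc => hb (hreach_vv'.trans hc)
    -- helper: a rooted edge f ≠ e touching the component kills both
    have hkill : ∀ f, 2 ≤ mult f → f ≠ e →
        (∃ w ∈ P.endsRed f, Reachable P.endsRed (P.mSupport mult) v w) → False := by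
      rintro f h2f hfe ⟨w, hwf, hvw⟩
      have hk1 := h.2.2.2.1 f h2f hfe w hwf
      have hk2 := h'.2.2.2.1 f h2f hfe w hwf
      rcases reach_erase_or hvv' hvw.symm with hc | hc
      · exact hk1 hc.symm
      · exact hk2 hc.symm
    -- so both must use the minComp disjunct
    have hd : ¬ Reachable P.endsRed ((P.mSupport mult).erase e) v
        (minComp P.endsRed (P.mSupport mult) v) := by
      rcases h.2.2.2.2 with hc | hc | hc | hc
      · exact absurd hc hb
      · exact absurd hc hm3
      · exact absurd (hkill _ hc.choose_spec.1 hc.choose_spec.2.1 hc.choose_spec.2.2) not_false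
      · exact hc
    have hd' : ¬ Reachable P.endsRed ((P.mSupport mult).erase e) v'
        (minComp P.endsRed (P.mSupport mult) v') := by
      rcases h'.2.2.2.2 with hc | hc | hc | hc
      · exact absurd hc hb'
      · exact absurd hc hm3
      · refine absurd (hkill _ hc.choose_spec.1 hc.choose_spec.2.1 ?_) not_false
        obtain ⟨w, hw1, hw2⟩ := hc.choose_spec.2.2
        exact ⟨w, hw1, hreach_vv'.trans hw2⟩
      · exact hc
    have hmm : minComp P.endsRed (P.mSupport mult) v' =
        minComp P.endsRed (P.mSupport mult) v := (minComp_congr hreach_vv').symm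
    rw [hmm] at hd'
    have hmv : Reachable P.endsRed (P.mSupport mult)
        (minComp P.endsRed (P.mSupport mult) v) v := (reach_minComp v).symm
    rcases reach_erase_or hvv' hmv with hc | hc
    · exact hd hc.symm
    · exact hd' hc.symm

end BiconedGraph

set_option linter.unusedSectionVars false
set_option linter.unusedVariables false

open MWalk

lemma list_mem_of_getLast? {α : Type} {l : List α} {a : α} (h : l.getLast? = some a) :
    a ∈ l := by
  obtain ⟨hne, heq⟩ := List.mem_getLast?_eq_getLast (l := l) (x := a) h
  rw [heq]
  exact List.getLast_mem hne

namespace MWalk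

variable {ε ν : Type} {ends : ε → Sym2 ν}

lemma eq_of_edges_nil : ∀ {u v : ν} (p : MWalk ends u v), p.edges = [] → u = v
  | _, _, nil _, _ => rfl
  | _, _, cons e x h p, hc => by simp at hc

/-- A path whose edge list is `[e]` is a single step. -/
lemma single_edge {u v : ν} (p : MWalk ends u v) {e : ε} (h : p.edges = [e]) :
    ends e = s(u, v) := by
  cases p with
  | nil _ => simp at h
  | cons f x hf p =>
    rw [edges_cons] at h
    obtain ⟨rfl, hp⟩ : f = e ∧ p.edges = [] := by
      constructor
      · exact (List.cons_eq_cons.1 h).1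
      · exact (List.cons_eq_cons.1 h).2
    rw [eq_of_edges_nil p hp] at hf
    exact hf

end MWalk

namespace BiconedGraph

variable {P : BiconedGraph} {mult : P.Ered → ℕ}

lemma side_true_of_ne_bot {x : P.Vred} (h : P.side (⊥ : P.Vred) ≠ P.side x) :
    P.side x = true := by
  rw [P.side_bot] at h
  cases hx : P.side x
  · exact absurd hx.symm h
  · rfl

lemma inA_cond_of_side_ne {r1 r2 : P.Vred} (h : P.side r1 ≠ P.side r2) :
    (P.InA r1 ∧ ¬ P.InA r2) ∨ (P.InA r2 ∧ ¬ P.InA r1) := by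
  cases h1 : P.side r1 <;> cases h2 : P.side r2 <;> rw [h1, h2] at h
  · exact absurd rfl h
  · refine Or.inr ⟨(P.side_eq_true_iff r2).1 h2, fun hc => ?_⟩
    rw [← P.side_eq_true_iff r1, h1] at hc
    exact Bool.noConfusion hc
  · refine Or.inl ⟨(P.side_eq_true_iff r1).1 h1, fun hc => ?_⟩
    rw [← P.side_eq_true_iff r2, h2] at hc
    exact Bool.noConfusion hc
  · exact absurd rfl h

lemma er_le_two (h2 : P.Is2ERF mult) (v : P.Vred) : P.compEdgeRoots mult v ≤ 2 := by
  have h := h2.2.1 v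
  have := compEdgeRoots_le_compCount (mult := mult) v
  omega

lemma er_le_one_of_bot (h2 : P.Is2ERF mult) {v : P.Vred}
    (hb : Reachable P.endsRed (P.mSupport mult) v ⊥) : P.compEdgeRoots mult v ≤ 1 := by
  have h := h2.2.1 v
  unfold compCount at h
  rw [if_pos hb] at h
  omega

lemma compCount_of_bot {v : P.Vred}
    (hb : Reachable P.endsRed (P.mSupport mult) v ⊥) :
    P.compCount mult v = P.compEdgeRoots mult v + 1 := by
  unfold compCount
  rw [if_pos hb]

lemma compCount_of_not_bot {v : P.Vred}
    (hb : ¬ Reachable P.endsRed (P.mSupport mult) v ⊥) :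
    P.compCount mult v = P.compEdgeRoots mult v := by
  unfold compCount
  rw [if_neg hb]
  omega

/-- **Structure of the `⊥`-component when it carries an edge root.** -/
lemma bot_comp_structure (h2 : P.Is2ERF mult) {v : P.Vred}
    (hb : Reachable P.endsRed (P.mSupport mult) v ⊥)
    (hk : P.compEdgeRoots mult v = 1) :
    ∃ e x u, P.Tset mult v = {e} ∧ mult e = 2 ∧ P.endsRed e = s(x, u) ∧
      ¬ Reachable P.endsRed ((P.mSupport mult).erase e) x ⊥ ∧
      Reachable P.endsRed (P.mSupport mult) v x ∧ P.side x = true ∧ x ≠ ⊥ ∧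
      P.AttachedRoot mult x e ∧
      (∀ y e', P.AttachedRoot mult y e' →
        Reachable P.endsRed (P.mSupport mult) v y → y = x) := by
  have hF : IsAcyclic P.endsRed (P.mSupport mult) := h2.1
  obtain ⟨e, hTs, hm2⟩ := P.Tset_structure_one hk
  have heT : e ∈ P.Tset mult v := hTs ▸ Finset.mem_singleton_self e
  have heF : e ∈ P.mSupport mult := P.mem_mSupport.2 (by omega)
  have htv : P.Touches (P.mSupport mult) v e := ((P.mem_Tset).1 heT).2
  have htb : P.Touches (P.mSupport mult) ⊥ e := (P.touches_congr hb).1 htv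
  obtain ⟨x, u, hxu, hnr, hur⟩ := farEnd_exists hF heF htb
  have hvx : Reachable P.endsRed (P.mSupport mult) v x :=
    P.reach_of_touches heF htv (by rw [hxu]; exact Sym2.mem_mk_left _ _)
  have hxbot : Reachable P.endsRed (P.mSupport mult) x ⊥ := hvx.symm.trans hb
  have hxne : x ≠ ⊥ := by
    rintro rfl
    exact hnr (Reachable.refl _ _)
  have hAtt : P.AttachedRoot mult x e := by
    refine ⟨by omega, ⟨u, hxu⟩, hnr, ?_, Or.inl hxbot⟩
    intro f h2f hfe w hwf hc
    have hfF : f ∈ P.mSupport mult := P.mem_mSupport.2 (by omega)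
    have : Reachable P.endsRed (P.mSupport mult) x w :=
      hc.mono (Finset.erase_subset _ _)
    have hft : f ∈ P.Tset mult v :=
      (P.mem_Tset).2 ⟨h2f, P.touches_of_mem hwf (hvx.trans this)⟩
    rw [hTs, Finset.mem_singleton] at hft
    exact hfe hft
  have huniq : ∀ y e', P.AttachedRoot mult y e' →
      Reachable P.endsRed (P.mSupport mult) v y → y = x := by
    intro y e' hy hvy
    have he'T : e' ∈ P.Tset mult v := attached_mem_Tset hy hvy
    rw [hTs, Finset.mem_singleton] at he'T
    subst he'T
    obtain ⟨u', hu'⟩ := hy.2.1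
    exact farEnd_unique hF heF htb hu' hy.2.2.1 hxu hnr
  -- side x = true, via C3
  have hcc : P.compCount mult v = 2 := by
    rw [compCount_of_bot hb, hk]
  obtain ⟨x0, p, hp, hpin, ⟨e', hlast', hm'⟩, hodd⟩ := (h2.2.2.2 v hcc).1 hb
  have hne : p.edges ≠ [] := by
    intro hc
    rw [hc] at hlast'
    exact absurd hlast' (by simp)
  have hbx0 : (⊥ : P.Vred) ≠ x0 := p.ne_of_edges_ne_nil hp hne
  obtain ⟨e'', hlast'', hTwd⟩ := last_isTwd P hF p hp hpin hbx0
  have heq : e'' = e' := Option.some_injective _ (hlast''.symm.trans hlast')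
  rw [heq] at hTwd
  have hvx0 : Reachable P.endsRed (P.mSupport mult) v x0 := hb.trans ⟨p, hpin⟩
  have he'T : e' ∈ P.Tset mult v := by
    obtain ⟨y', hy'⟩ := hTwd.2.1
    exact (P.mem_Tset).2 ⟨hm', P.touches_of_mem (by rw [hy']; exact Sym2.mem_mk_left _ _) hvx0⟩
  rw [hTs, Finset.mem_singleton] at he'T
  rw [he'T] at hTwd
  obtain ⟨y', hy'⟩ := hTwd.2.1
  have hx0x : x0 = x := farEnd_unique hF heF htb hy' hTwd.2.2 hxu hnr
  have hside : P.side x = true := by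
    rw [odd_bridgeCount_iff] at hodd
    rw [← hx0x]
    exact side_true_of_ne_bot hodd
  exact ⟨e, x, u, hTs, hm2, hxu, hnr, hvx, hside, hxne, hAtt, huniq⟩

/-- **Structure of a non-`⊥` component with one edge root.** -/
lemma nonbot_comp_structure_one (h2 : P.Is2ERF mult) {v : P.Vred}
    (hb : ¬ Reachable P.endsRed (P.mSupport mult) v ⊥)
    (hk : P.compEdgeRoots mult v = 1) :
    ∃ e x u, P.Tset mult v = {e} ∧ mult e = 2 ∧ P.endsRed e = s(x, u) ∧
      ¬ Reachable P.endsRed ((P.mSupport mult).erase e) x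
          (minComp P.endsRed (P.mSupport mult) v) ∧
      Reachable P.endsRed (P.mSupport mult) v x ∧
      P.AttachedRoot mult x e ∧
      (∀ y e', P.AttachedRoot mult y e' →
        Reachable P.endsRed (P.mSupport mult) v y → y = x) := by
  have hF : IsAcyclic P.endsRed (P.mSupport mult) := h2.1
  obtain ⟨e, hTs, hm2⟩ := P.Tset_structure_one hk
  have heT : e ∈ P.Tset mult v := hTs ▸ Finset.mem_singleton_self e
  have heF : e ∈ P.mSupport mult := P.mem_mSupport.2 (by omega)
  have htv : P.Touches (P.mSupport mult) v e := ((P.mem_Tset).1 heT).2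
  have hvm : Reachable P.endsRed (P.mSupport mult) v
      (minComp P.endsRed (P.mSupport mult) v) := reach_minComp v
  have htm : P.Touches (P.mSupport mult) (minComp P.endsRed (P.mSupport mult) v) e :=
    (P.touches_congr hvm).1 htv
  obtain ⟨x, u, hxu, hnr, hur⟩ := farEnd_exists hF heF htm
  have hvx : Reachable P.endsRed (P.mSupport mult) v x :=
    P.reach_of_touches heF htv (by rw [hxu]; exact Sym2.mem_mk_left _ _)
  have hxb : ¬ Reachable P.endsRed (P.mSupport mult) x ⊥ :=
    fun hc => hb (hvx.trans hc)
  have hAtt : P.AttachedRoot mult x e := by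
    refine ⟨by omega, ⟨u, hxu⟩, fun hc => hxb (hc.mono (Finset.erase_subset _ _)), ?_, ?_⟩
    · intro f h2f hfe w hwf hc
      have : Reachable P.endsRed (P.mSupport mult) x w :=
        hc.mono (Finset.erase_subset _ _)
      have hft : f ∈ P.Tset mult v :=
        (P.mem_Tset).2 ⟨h2f, P.touches_of_mem hwf (hvx.trans this)⟩
      rw [hTs, Finset.mem_singleton] at hft
      exact hfe hft
    · refine Or.inr (Or.inr (Or.inr ?_))
      have : minComp P.endsRed (P.mSupport mult) x =
          minComp P.endsRed (P.mSupport mult) v := (minComp_congr hvx).symm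
      rw [this]
      exact hnr
  have huniq : ∀ y e', P.AttachedRoot mult y e' →
      Reachable P.endsRed (P.mSupport mult) v y → y = x := by
    intro y e' hy hvy
    have he'T : e' ∈ P.Tset mult v := attached_mem_Tset hy hvy
    rw [hTs, Finset.mem_singleton] at he'T
    subst he'T
    obtain ⟨u', hu'⟩ := hy.2.1
    -- y's fifth clause must be the min-disjunct
    have hyb : ¬ Reachable P.endsRed (P.mSupport mult) y ⊥ :=
      fun hc => hb (hvy.trans hc)
    have hd : ¬ Reachable P.endsRed ((P.mSupport mult).erase e') y
        (minComp P.endsRed (P.mSupport mult) y) := by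
      rcases hy.2.2.2.2 with hc | hc | hc | hc
      · exact absurd hc hyb
      · rw [hm2] at hc; omega
      · exfalso
        obtain ⟨f, h2f, hfe, w, hwf, hyw⟩ := hc
        have hft : f ∈ P.Tset mult v :=
          (P.mem_Tset).2 ⟨h2f, P.touches_of_mem hwf (hvy.trans hyw)⟩
        rw [hTs, Finset.mem_singleton] at hft
        exact hfe hft
      · exact hc
    have hmy : minComp P.endsRed (P.mSupport mult) y =
        minComp P.endsRed (P.mSupport mult) v := (minComp_congr hvy).symm
    rw [hmy] at hd
    exact farEnd_unique hF heF htm hu' hd hxu hnr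
  exact ⟨e, x, u, hTs, hm2, hxu, hnr, hvx, hAtt, huniq⟩

/-- **Structure of a non-`⊥` component with two edge roots.** -/
lemma nonbot_comp_structure_two (h2 : P.Is2ERF mult) {v : P.Vred}
    (hb : ¬ Reachable P.endsRed (P.mSupport mult) v ⊥)
    (hk : P.compEdgeRoots mult v = 2) :
    ∃ x y, x ≠ y ∧ P.side x ≠ P.side y ∧
      Reachable P.endsRed (P.mSupport mult) v x ∧
      Reachable P.endsRed (P.mSupport mult) v y ∧
      (∀ z e', P.AttachedRoot mult z e' →
        Reachable P.endsRed (P.mSupport mult) v z → z = x ∨ z = y) ∧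
      ((∃ e, P.Tset mult v = {e} ∧ mult e = 3 ∧ P.endsRed e = s(x, y) ∧
          P.AttachedRoot mult x e ∧ P.AttachedRoot mult y e) ∨
       (∃ e f, e ≠ f ∧ P.Tset mult v = {e, f} ∧ mult e = 2 ∧ mult f = 2 ∧
          P.AttachedRoot mult x e ∧ P.AttachedRoot mult y f ∧
          IsTwd P.endsRed (P.mSupport mult) x y e ∧
          IsTwd P.endsRed (P.mSupport mult) y x f)) := by
  have hF : IsAcyclic P.endsRed (P.mSupport mult) := h2.1
  have hcc : P.compCount mult v = 2 := by rw [compCount_of_not_bot hb, hk]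
  obtain ⟨x0, y0, p, hp, hpin, hvx0, ⟨e1, hh1, hm1⟩, ⟨e2, hl2, hm2⟩, hsing, hodd⟩ :=
    (h2.2.2.2 v hcc).2 hb
  have hne : p.edges ≠ [] := by
    intro hc
    rw [hc] at hh1
    exact absurd hh1 (by simp)
  have hxy0 : x0 ≠ y0 := p.ne_of_edges_ne_nil hp hne
  obtain ⟨e1', hh1', hTwd1'⟩ := head_isTwd P hF p hp hpin hxy0
  have hTwd1 : IsTwd P.endsRed (P.mSupport mult) x0 y0 e1 := by
    have heq : e1' = e1 := Option.some_injective _ (hh1'.symm.trans hh1)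
    rw [← heq]
    exact hTwd1'
  obtain ⟨e2', hl2', hTwd2'⟩ := last_isTwd P hF p hp hpin hxy0
  have hTwd2 : IsTwd P.endsRed (P.mSupport mult) y0 x0 e2 := by
    have heq : e2' = e2 := Option.some_injective _ (hl2'.symm.trans hl2)
    rw [← heq]
    exact hTwd2'
  have hx0y0 : Reachable P.endsRed (P.mSupport mult) x0 y0 := ⟨p, hpin⟩
  have hvy0 : Reachable P.endsRed (P.mSupport mult) v y0 := hvx0.trans hx0y0
  have hx0b : ¬ Reachable P.endsRed (P.mSupport mult) x0 ⊥ :=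
    fun hc => hb (hvx0.trans hc)
  have hy0b : ¬ Reachable P.endsRed (P.mSupport mult) y0 ⊥ :=
    fun hc => hb (hvy0.trans hc)
  have he1T : e1 ∈ P.Tset mult v := by
    obtain ⟨z, hz⟩ := hTwd1.2.1
    exact (P.mem_Tset).2 ⟨hm1, P.touches_of_mem (by rw [hz]; exact Sym2.mem_mk_left _ _) hvx0⟩
  have he2T : e2 ∈ P.Tset mult v := by
    obtain ⟨z, hz⟩ := hTwd2.2.1
    exact (P.mem_Tset).2 ⟨hm2, P.touches_of_mem (by rw [hz]; exact Sym2.mem_mk_left _ _) hvy0⟩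
  have hsides : P.side x0 ≠ P.side y0 := (odd_bridgeCount_iff _ _).1 hodd
  rcases P.Tset_structure_two hk with ⟨e, hTs, hm3⟩ | ⟨e, f, hef, hTs, hme, hmf⟩
  · -- single edge of multiplicity 3
    have he1e : e1 = e := by
      have := he1T; rw [hTs, Finset.mem_singleton] at this; exact this
    have he2e : e2 = e := by
      have := he2T; rw [hTs, Finset.mem_singleton] at this; exact this
    subst he1e
    have hedges : p.edges = [e1] := by
      apply list_singleton_of_head_last (edges_nodup_of_isPath p hp) hh1
      rw [he2e] at hl2
      exact hl2
    have hends : P.endsRed e1 = s(x0, y0) := p.single_edge hedges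
    have heF : e1 ∈ P.mSupport mult := P.mem_mSupport.2 (by omega)
    have hAttx : P.AttachedRoot mult x0 e1 := by
      refine ⟨by omega, ⟨y0, hends⟩,
        fun hc => hx0b (hc.mono (Finset.erase_subset _ _)), ?_, Or.inr (Or.inl hm3)⟩
      intro g h2g hge w hwg hc
      have : Reachable P.endsRed (P.mSupport mult) x0 w :=
        hc.mono (Finset.erase_subset _ _)
      have hgt : g ∈ P.Tset mult v :=
        (P.mem_Tset).2 ⟨h2g, P.touches_of_mem hwg (hvx0.trans this)⟩
      rw [hTs, Finset.mem_singleton] at hgt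
      exact hge hgt
    have hAtty : P.AttachedRoot mult y0 e1 := by
      refine ⟨by omega, ⟨x0, by rw [hends, Sym2.eq_swap]⟩,
        fun hc => hy0b (hc.mono (Finset.erase_subset _ _)), ?_, Or.inr (Or.inl hm3)⟩
      intro g h2g hge w hwg hc
      have : Reachable P.endsRed (P.mSupport mult) y0 w :=
        hc.mono (Finset.erase_subset _ _)
      have hgt : g ∈ P.Tset mult v :=
        (P.mem_Tset).2 ⟨h2g, P.touches_of_mem hwg (hvy0.trans this)⟩
      rw [hTs, Finset.mem_singleton] at hgt
      exact hge hgt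
    refine ⟨x0, y0, hxy0, hsides, hvx0, hvy0, ?_, Or.inl ⟨e1, hTs, hm3, hends, hAttx, hAtty⟩⟩
    intro z e' hz hvz
    have he'T : e' ∈ P.Tset mult v := attached_mem_Tset hz hvz
    rw [hTs, Finset.mem_singleton] at he'T
    subst he'T
    obtain ⟨u', hu'⟩ := hz.2.1
    rw [hends] at hu'
    rw [Sym2.eq_iff] at hu'
    rcases hu' with ⟨rfl, rfl⟩ | ⟨rfl, rfl⟩
    · exact Or.inl rfl
    · exact Or.inr rfl
  · -- two edges of multiplicity 2
    have he12 : e1 ≠ e2 := by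
      rintro rfl
      have hedges : p.edges = [e1] :=
        list_singleton_of_head_last (edges_nodup_of_isPath p hp) hh1 hl2
      have := hsing e1 hedges
      have hm : mult e1 = 2 := by
        have := he1T; rw [hTs, Finset.mem_insert, Finset.mem_singleton] at this
        rcases this with rfl | rfl
        · exact hme
        · exact hmf
      omega
    -- {e1, e2} = Tset v
    have hsub : ({e1, e2} : Finset P.Ered) ⊆ P.Tset mult v := by
      intro g hg
      rw [Finset.mem_insert, Finset.mem_singleton] at hg
      rcases hg with rfl | rfl
      · exact he1T
      · exact he2T
    have hTs12 : P.Tset mult v = {e1, e2} := by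
      apply (Finset.eq_of_subset_of_card_le hsub ?_).symm
      rw [hTs, Finset.card_insert_of_notMem (by simp [hef]), Finset.card_singleton,
        Finset.card_insert_of_notMem (by simp [he12]), Finset.card_singleton]
    have hm1' : mult e1 = 2 := by
      have := he1T; rw [hTs, Finset.mem_insert, Finset.mem_singleton] at this
      rcases this with rfl | rfl
      · exact hme
      · exact hmf
    have hm2' : mult e2 = 2 := by
      have := he2T; rw [hTs, Finset.mem_insert, Finset.mem_singleton] at this
      rcases this with rfl | rfl
      · exact hme
      · exact hmf
    have he2F : e2 ∈ P.mSupport mult := P.mem_mSupport.2 (by omega)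
    have he1F : e1 ∈ P.mSupport mult := P.mem_mSupport.2 (by omega)
    obtain ⟨z1, hz1⟩ := hTwd1.2.1
    obtain ⟨z2, hz2⟩ := hTwd2.2.1
    -- clause 4 data
    have hcl4x : ∀ g, 2 ≤ mult g → g ≠ e1 → ∀ w ∈ P.endsRed g,
        ¬ Reachable P.endsRed ((P.mSupport mult).erase e1) x0 w := by
      intro g h2g hge w hwg hc
      have hxw : Reachable P.endsRed (P.mSupport mult) x0 w :=
        hc.mono (Finset.erase_subset _ _)
      have hgt : g ∈ P.Tset mult v :=
        (P.mem_Tset).2 ⟨h2g, P.touches_of_mem hwg (hvx0.trans hxw)⟩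
      rw [hTs12, Finset.mem_insert, Finset.mem_singleton] at hgt
      rcases hgt with rfl | rfl
      · exact hge rfl
      · -- g = e2 : w connects to y0 avoiding e1, contradicting IsTwd
        have hg2 : g ∈ (P.mSupport mult).erase e1 := Finset.mem_erase.2 ⟨hge, he2F⟩
        have hwy0 : Reachable P.endsRed ((P.mSupport mult).erase e1) w y0 := by
          rw [hz2] at hwg
          rw [Sym2.mem_iff] at hwg
          rcases hwg with rfl | rfl
          · exact Reachable.refl _ _
          · exact (reachable_of_edge hg2 hz2).symm.trans
              (Reachable.refl _ _) |>.symm.symm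
        exact hTwd1.2.2 (hc.trans hwy0)
    have hcl4y : ∀ g, 2 ≤ mult g → g ≠ e2 → ∀ w ∈ P.endsRed g,
        ¬ Reachable P.endsRed ((P.mSupport mult).erase e2) y0 w := by
      intro g h2g hge w hwg hc
      have hyw : Reachable P.endsRed (P.mSupport mult) y0 w :=
        hc.mono (Finset.erase_subset _ _)
      have hgt : g ∈ P.Tset mult v :=
        (P.mem_Tset).2 ⟨h2g, P.touches_of_mem hwg (hvy0.trans hyw)⟩
      rw [hTs12, Finset.mem_insert, Finset.mem_singleton] at hgt
      rcases hgt with rfl | rfl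
      · -- g = e1 : w connects to x0 avoiding e2
        have hg1 : g ∈ (P.mSupport mult).erase e2 := Finset.mem_erase.2 ⟨hge, he1F⟩
        have hwx0 : Reachable P.endsRed ((P.mSupport mult).erase e2) w x0 := by
          rw [hz1] at hwg
          rw [Sym2.mem_iff] at hwg
          rcases hwg with rfl | rfl
          · exact Reachable.refl _ _
          · exact (reachable_of_edge hg1 hz1).symm
        exact hTwd2.2.2 (hc.trans hwx0)
      · exact hge rfl
    have hAttx : P.AttachedRoot mult x0 e1 := by
      refine ⟨by omega, ⟨z1, hz1⟩,
        fun hc => hx0b (hc.mono (Finset.erase_subset _ _)), hcl4x, ?_⟩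
      exact Or.inr (Or.inr (Or.inl ⟨e2, by omega, (Ne.symm he12),
        y0, by rw [hz2]; exact Sym2.mem_mk_left _ _, hx0y0⟩))
    have hAtty : P.AttachedRoot mult y0 e2 := by
      refine ⟨by omega, ⟨z2, hz2⟩,
        fun hc => hy0b (hc.mono (Finset.erase_subset _ _)), hcl4y, ?_⟩
      exact Or.inr (Or.inr (Or.inl ⟨e1, by omega, he12,
        x0, by rw [hz1]; exact Sym2.mem_mk_left _ _, hx0y0.symm⟩))
    refine ⟨x0, y0, hxy0, hsides, hvx0, hvy0, ?_,
      Or.inr ⟨e1, e2, he12, hTs12, hm1', hm2', hAttx, hAtty, hTwd1, hTwd2⟩⟩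
    intro z e' hz hvz
    have he'T : e' ∈ P.Tset mult v := attached_mem_Tset hz hvz
    rw [hTs12, Finset.mem_insert, Finset.mem_singleton] at he'T
    rcases he'T with rfl | rfl
    · by_cases hzx : z = x0
      · exact Or.inl hzx
      · have := attached_unique h2 hz hAttx (hzx)
        rw [hm1'] at this
        omega
    · by_cases hzy : z = y0
      · exact Or.inr hzy
      · have := attached_unique h2 hz hAtty (hzy)
        rw [hm2'] at this
        omega

end BiconedGraph

set_option linter.unusedSectionVars false
set_option linter.unusedVariables false

open MWalk

namespace BiconedGraph

variable {P : BiconedGraph} {mult : P.Ered → ℕ}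

lemma bot_mem_bwdR : (⊥ : P.Vred) ∈ P.bwdR mult := Or.inl rfl

lemma minComp_idem {F : Finset P.Ered} (v : P.Vred) :
    minComp P.endsRed F v = minComp P.endsRed F (minComp P.endsRed F v) :=
  minComp_congr (reach_minComp v)

lemma min_mem_bwdR {v : P.Vred}
    (hb : ¬ Reachable P.endsRed (P.mSupport mult) v ⊥)
    (hk : P.compEdgeRoots mult v = 0) :
    minComp P.endsRed (P.mSupport mult) v ∈ P.bwdR mult := by
  refine Or.inr (Or.inl ⟨?_, ?_, minComp_idem v⟩)
  · intro hc
    exact hb ((reach_minComp v).trans hc)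
  · rw [← compEdgeRoots_congr P (reach_minComp (F := P.mSupport mult) v)]
    exact hk

/-- Classify a root of `bwdR` lying in the component of `v`. -/
lemma bwd_root_cases {v y : P.Vred} (hy : y ∈ P.bwdR mult)
    (hr : Reachable P.endsRed (P.mSupport mult) v y) :
    y = ⊥ ∨
    (¬ Reachable P.endsRed (P.mSupport mult) v ⊥ ∧ P.compEdgeRoots mult v = 0 ∧
      y = minComp P.endsRed (P.mSupport mult) v) ∨
    (∃ e', P.AttachedRoot mult y e') := by
  rcases hy with rfl | ⟨hb, hk, hm⟩ | he
  · exact Or.inl rfl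
  · refine Or.inr (Or.inl ⟨fun hc => hb (hr.symm.trans hc), ?_, ?_⟩)
    · rw [compEdgeRoots_congr P hr]
      exact hk
    · rw [hm]
      exact (minComp_congr hr).symm
  · exact Or.inr (Or.inr he)

/-- Each component contains at most two roots of `bwdR`. -/
lemma bwd_roots_bound (h2 : P.Is2ERF mult) (v : P.Vred) :
    ∃ a b : P.Vred, ∀ y, y ∈ P.bwdR mult →
      Reachable P.endsRed (P.mSupport mult) v y → (y = a ∨ y = b) := by
  by_cases hb : Reachable P.endsRed (P.mSupport mult) v ⊥
  · have hk := er_le_one_of_bot h2 hb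
    interval_cases hke : P.compEdgeRoots mult v
    · refine ⟨⊥, ⊥, ?_⟩
      intro y hy hr
      rcases bwd_root_cases hy hr with rfl | ⟨hc, -, -⟩ | ⟨e', hAtt⟩
      · exact Or.inl rfl
      · exact absurd hb hc
      · exfalso
        have := attached_mem_Tset hAtt hr
        rw [P.Tset_eq_empty_of_zero hke] at this
        exact Finset.notMem_empty _ this
    · obtain ⟨e, x, u, hTs, hm2, hxu, hnr, hvx, hside, hxne, hAttx, huniq⟩ :=
        bot_comp_structure h2 hb hke
      refine ⟨⊥, x, ?_⟩
      intro y hy hr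
      rcases bwd_root_cases hy hr with rfl | ⟨hc, -, -⟩ | ⟨e', hAtt⟩
      · exact Or.inl rfl
      · exact absurd hb hc
      · exact Or.inr (huniq y e' hAtt hr)
  · have hk := er_le_two h2 v
    interval_cases hke : P.compEdgeRoots mult v
    · refine ⟨minComp P.endsRed (P.mSupport mult) v,
        minComp P.endsRed (P.mSupport mult) v, ?_⟩
      intro y hy hr
      rcases bwd_root_cases hy hr with rfl | ⟨-, -, hm⟩ | ⟨e', hAtt⟩
      · exact absurd hr hb
      · exact Or.inl hm
      · exfalso
        have := attached_mem_Tset hAtt hr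
        rw [P.Tset_eq_empty_of_zero hke] at this
        exact Finset.notMem_empty _ this
    · obtain ⟨e, x, u, hTs, hm2, hxu, hnr, hvx, hAttx, huniq⟩ :=
        nonbot_comp_structure_one h2 hb hke
      refine ⟨x, x, ?_⟩
      intro y hy hr
      rcases bwd_root_cases hy hr with rfl | ⟨-, hk0, -⟩ | ⟨e', hAtt⟩
      · exact absurd hr hb
      · omega
      · exact Or.inl (huniq y e' hAtt hr)
    · obtain ⟨x, y', hxy, hsides, hvx, hvy, huniq, -⟩ :=
        nonbot_comp_structure_two h2 hb hke
      refine ⟨x, y', ?_⟩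
      intro y hy hr
      rcases bwd_root_cases hy hr with rfl | ⟨-, hk0, -⟩ | ⟨e', hAtt⟩
      · exact absurd hr hb
      · omega
      · exact huniq y e' hAtt hr

/-- A pair of distinct roots in one component: the component has count `2`
and the two roots have different sides. -/
lemma bwd_pair (h2 : P.Is2ERF mult) {r1 r2 : P.Vred} (h1 : r1 ∈ P.bwdR mult)
    (h2r : r2 ∈ P.bwdR mult) (hne : r1 ≠ r2)
    (hreach : Reachable P.endsRed (P.mSupport mult) r1 r2) :
    P.compCount mult r1 = 2 ∧ P.side r1 ≠ P.side r2 := by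
  by_cases hb : Reachable P.endsRed (P.mSupport mult) r1 ⊥
  · have hk := er_le_one_of_bot h2 hb
    have classify : ∀ y, y ∈ P.bwdR mult →
        Reachable P.endsRed (P.mSupport mult) r1 y →
        P.compEdgeRoots mult r1 = 0 → y = ⊥ := by
      intro y hy hr hke
      rcases bwd_root_cases hy hr with rfl | ⟨hc, -, -⟩ | ⟨e', hAtt⟩
      · rfl
      · exact absurd hb hc
      · exfalso
        have := attached_mem_Tset hAtt hr
        rw [P.Tset_eq_empty_of_zero hke] at this
        exact Finset.notMem_empty _ this
    interval_cases hke : P.compEdgeRoots mult r1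
    · exfalso
      have e1 := classify r1 h1 (Reachable.refl _ _) rfl
      have e2 := classify r2 h2r hreach rfl
      rw [e1, e2] at hne
      exact hne rfl
    · obtain ⟨e, x, u, hTs, hm2, hxu, hnr, hvx, hside, hxne, hAttx, huniq⟩ :=
        bot_comp_structure h2 hb hke
      have hcc : P.compCount mult r1 = 2 := by rw [compCount_of_bot hb, hke]
      have hclass : ∀ y, y ∈ P.bwdR mult →
          Reachable P.endsRed (P.mSupport mult) r1 y → y = ⊥ ∨ y = x := by
        intro y hy hr
        rcases bwd_root_cases hy hr with rfl | ⟨hc, -, -⟩ | ⟨e', hAtt⟩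
        · exact Or.inl rfl
        · exact absurd hb hc
        · exact Or.inr (huniq y e' hAtt hr)
      refine ⟨hcc, ?_⟩
      rcases hclass r1 h1 (Reachable.refl _ _) with rfl | rfl <;>
        rcases hclass r2 h2r hreach with rfl | rfl
      · exact absurd rfl hne
      · rw [P.side_bot, hside]; simp
      · rw [P.side_bot, hside]; simp
      · exact absurd rfl hne
  · have hk := er_le_two h2 r1
    interval_cases hke : P.compEdgeRoots mult r1
    · exfalso
      have classify : ∀ y, y ∈ P.bwdR mult →
          Reachable P.endsRed (P.mSupport mult) r1 y →
          y = minComp P.endsRed (P.mSupport mult) r1 := by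
        intro y hy hr
        rcases bwd_root_cases hy hr with rfl | ⟨-, -, hm⟩ | ⟨e', hAtt⟩
        · exact absurd hr hb
        · exact hm
        · exfalso
          have := attached_mem_Tset hAtt hr
          rw [P.Tset_eq_empty_of_zero hke] at this
          exact Finset.notMem_empty _ this
      have e1 := classify r1 h1 (Reachable.refl _ _)
      have e2 := classify r2 h2r hreach
      rw [e1, e2] at hne
      exact hne rfl
    · exfalso
      obtain ⟨e, x, u, hTs, hm2, hxu, hnr, hvx, hAttx, huniq⟩ :=
        nonbot_comp_structure_one h2 hb hke
      have classify : ∀ y, y ∈ P.bwdR mult →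
          Reachable P.endsRed (P.mSupport mult) r1 y → y = x := by
        intro y hy hr
        rcases bwd_root_cases hy hr with rfl | ⟨-, hk0, -⟩ | ⟨e', hAtt⟩
        · exact absurd hr hb
        · omega
        · exact huniq y e' hAtt hr
      have e1 := classify r1 h1 (Reachable.refl _ _)
      have e2 := classify r2 h2r hreach
      rw [e1, e2] at hne
      exact hne rfl
    · obtain ⟨x, y', hxy, hsides, hvx, hvy, huniq, -⟩ :=
        nonbot_comp_structure_two h2 hb hke
      have hcc : P.compCount mult r1 = 2 := by
        rw [compCount_of_not_bot hb]
        omega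
      have hclass : ∀ y, y ∈ P.bwdR mult →
          Reachable P.endsRed (P.mSupport mult) r1 y → y = x ∨ y = y' := by
        intro y hy hr
        rcases bwd_root_cases hy hr with rfl | ⟨-, hk0, -⟩ | ⟨e', hAtt⟩
        · exact absurd hr hb
        · omega
        · exact huniq y e' hAtt hr
      refine ⟨hcc, ?_⟩
      rcases hclass r1 h1 (Reachable.refl _ _) with rfl | rfl <;>
        rcases hclass r2 h2r hreach with rfl | rfl
      · exact absurd rfl hne
      · exact hsides
      · exact hsides.symm
      · exact absurd rfl hne

/-- **Main theorem, part 2:** the backward map produces a birooted forest. -/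
theorem bwd_isBirooted (h2 : P.Is2ERF mult) :
    P.IsBirootedForest (P.mSupport mult) (P.bwdR mult) := by
  refine ⟨h2.1, bot_mem_bwdR, ?_, ?_, ?_, ?_⟩
  · -- every component has a root
    intro v
    by_cases hb : Reachable P.endsRed (P.mSupport mult) v ⊥
    · exact ⟨⊥, bot_mem_bwdR, hb⟩
    · have hk := er_le_two h2 v
      interval_cases hke : P.compEdgeRoots mult v
      · exact ⟨minComp P.endsRed (P.mSupport mult) v, min_mem_bwdR hb hke, reach_minComp v⟩
      · obtain ⟨e, x, u, hTs, hm2, hxu, hnr, hvx, hAttx, huniq⟩ :=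
          nonbot_comp_structure_one h2 hb hke
        exact ⟨x, Or.inr (Or.inr ⟨e, hAttx⟩), hvx⟩
      · obtain ⟨x, y', hxy, hsides, hvx, hvy, huniq, hdata⟩ :=
          nonbot_comp_structure_two h2 hb hke
        rcases hdata with ⟨e, -, -, -, hAttx, -⟩ | ⟨e, f, -, -, -, -, hAttx, -, -, -⟩
        · exact ⟨x, Or.inr (Or.inr ⟨e, hAttx⟩), hvx⟩
        · exact ⟨x, Or.inr (Or.inr ⟨e, hAttx⟩), hvx⟩
  · -- no three roots in a component
    intro r1 h1 r2 h2r r3 h3 h12 h13 h23 hr12 hr13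
    obtain ⟨a, b, hab⟩ := bwd_roots_bound h2 r1
    have c1 := hab r1 h1 (Reachable.refl _ _)
    have c2 := hab r2 h2r hr12
    have c3 := hab r3 h3 hr13
    rcases c1 with rfl | rfl <;> rcases c2 with rfl | rfl <;> rcases c3 with rfl | rfl <;>
      simp_all
  · -- at most one doubly-rooted component
    intro r1 h1 r2 h2r r3 h3 r4 h4 h12 h34 hr12 hr34
    have p1 := bwd_pair h2 h1 h2r h12 hr12
    have p3 := bwd_pair h2 h3 h4 h34 hr34
    exact h2.2.2.1 r1 r3 p1.1 p3.1
  · -- the two roots have different sides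
    intro r1 h1 r2 h2r h12 hr12
    exact inA_cond_of_side_ne (bwd_pair h2 h1 h2r h12 hr12).2

end BiconedGraph

set_option linter.unusedSectionVars false
set_option linter.unusedVariables false

open MWalk

namespace BiconedGraph

variable {P : BiconedGraph} {F : Finset P.Ered} {R : Set P.Vred}

/-- A root of a birooted forest whose edge exists is an attached root of the
forward multiplicity function. -/
lemma attKey (hBR : P.IsBirootedForest F R) {r : P.Vred} {e : P.Ered} (hr : r ∈ R)
    (hre : P.rootEdgeF F R r = some e) : P.AttachedRoot (P.fwdMult F R) r e := by
  have hF : IsAcyclic P.endsRed F := hBR.1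
  have hsupp := P.mSupport_fwdMult F R
  obtain ⟨hrR, hrb, hTwd⟩ := (P.rootEdgeF_eq_some_iff hF).1 hre
  obtain ⟨heF, y, hy⟩ := P.rootEdgeF_endpoint hF hre
  have hm2 : 2 ≤ P.fwdMult F R e := fwdMult_le_two_of_rootEdge hF hre
  -- the target of r
  set t := P.targetR F R r with ht
  have hclause3 : ¬ Reachable P.endsRed (F.erase e) r ⊥ := by
    by_cases hb : Reachable P.endsRed F r ⊥
    · -- the target is ⊥
      have : t = ⊥ := targetR_eq_of_pair hBR hr hBR.2.1 (Ne.symm hrb) hb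
      rw [← this]
      exact hTwd.2.2
    · exact fun hc => hb (hc.mono (Finset.erase_subset _ _))
  have hclause4 : ∀ f, 2 ≤ P.fwdMult F R f → f ≠ e → ∀ w ∈ P.endsRed f,
      ¬ Reachable P.endsRed (F.erase e) r w := by
    intro f hf2 hfe w hwf hc
    have hrw : Reachable P.endsRed F r w := hc.mono (Finset.erase_subset _ _)
    have hfF : f ∈ F := by
      by_contra hnf
      rw [P.fwdMult_of_not_mem hnf] at hf2
      omega
    -- there is a root s with edge f
    have hfib : 0 < (Finset.univ.filter fun s => P.rootEdgeF F R s = some f).card := by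
      rw [P.fwdMult_of_mem hfF] at hf2
      omega
    obtain ⟨s, hs⟩ := Finset.card_pos.1 hfib
    rw [Finset.mem_filter] at hs
    have hsf := hs.2
    obtain ⟨hsR, hsb, hsTwd⟩ := (P.rootEdgeF_eq_some_iff hF).1 hsf
    obtain ⟨-, z, hz⟩ := P.rootEdgeF_endpoint hF hsf
    -- s is in the component of r
    have hrs : Reachable P.endsRed F r s := by
      refine hrw.trans (P.reach_of_touches hfF ?_ (by rw [hz]; exact Sym2.mem_mk_left _ _))
      exact P.touches_of_mem hwf (Reachable.refl _ _)
    have hsr : s ≠ r := by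
      rintro rfl
      exact hfe (Option.some_injective _ (hsf.symm.trans hre))
    -- so the target of r is s
    have hts : t = s := targetR_eq_of_pair hBR hr hsR hsr hrs
    -- w is connected to s avoiding e
    have hfe' : f ∈ F.erase e := Finset.mem_erase.2 ⟨hfe, hfF⟩
    have hws : Reachable P.endsRed (F.erase e) w s := by
      rw [hz] at hwf
      rw [Sym2.mem_iff] at hwf
      rcases hwf with rfl | rfl
      · exact Reachable.refl _ _
      · exact (reachable_of_edge hfe' hz).symm
    have : Reachable P.endsRed (F.erase e) r t := by
      rw [hts]
      exact hc.trans hws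
    exact hTwd.2.2 this
  have hclause5 : Reachable P.endsRed F r ⊥ ∨ P.fwdMult F R e = 3 ∨
      (∃ f, 2 ≤ P.fwdMult F R f ∧ f ≠ e ∧ ∃ w ∈ P.endsRed f,
        Reachable P.endsRed F r w) ∨
      ¬ Reachable P.endsRed (F.erase e) r (minComp P.endsRed F r) := by
    by_cases hb : Reachable P.endsRed F r ⊥
    · exact Or.inl hb
    · cases hm : P.mateO F R r with
      | none =>
        refine Or.inr (Or.inr (Or.inr ?_))
        have : t = minComp P.endsRed F r := by
          rw [ht]
          unfold targetR
          rw [hm]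
          rfl
        rw [← this]
        exact hTwd.2.2
      | some m =>
        obtain ⟨hmR, hmr, hmreach⟩ := P.mateO_spec hm
        have htm : t = m := by rw [ht]; unfold targetR; rw [hm]; rfl
        have hmbot : m ≠ ⊥ := by
          rintro rfl
          exact hb hmreach
        have hmt : P.targetR F R m = r := targetR_eq_of_pair hBR hmR hr hmr.symm hmreach.symm
        have hmsome : (P.rootEdgeF F R m).isSome := by
          rw [P.rootEdgeF_isSome_iff hF, hmt]
          exact ⟨hmR, hmbot, hmr⟩
        obtain ⟨em, hem⟩ := Option.isSome_iff_exists.1 hmsome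
        obtain ⟨hemF, zm, hzm⟩ := P.rootEdgeF_endpoint hF hem
        by_cases heme : em = e
        · -- both r and m map to e : multiplicity 3
          subst heme
          refine Or.inr (Or.inl ?_)
          have hle3 : P.fwdMult F R em ≤ 3 := by
            have h2' := fwd_is2ERF hBR
            have hT : em ∈ P.Tset (P.fwdMult F R) r := by
              rw [mem_Tset, hsupp]
              exact ⟨hm2, P.touches_of_mem (by rw [hy]; exact Sym2.mem_mk_left _ _)
                (Reachable.refl _ _)⟩
            have := single_le_compEdgeRoots hT
            have := er_le_two h2' r
            omega
          have hge3 : 3 ≤ P.fwdMult F R em := by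
            rw [P.fwdMult_of_mem hemF]
            have hsub : ({r, m} : Finset P.Vred) ⊆
                Finset.univ.filter fun s => P.rootEdgeF F R s = some em := by
              intro s hs
              rw [Finset.mem_insert, Finset.mem_singleton] at hs
              rcases hs with rfl | rfl
              · simp [hre]
              · simp [hem]
            have := Finset.card_le_card hsub
            rw [Finset.card_insert_of_notMem (by simp [Ne.symm hmr]),
              Finset.card_singleton] at this
            omega
          omega
        · refine Or.inr (Or.inr (Or.inl ⟨em, fwdMult_le_two_of_rootEdge hF hem, heme,
            m, by rw [hzm]; exact Sym2.mem_mk_left _ _, hmreach⟩))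
  refine ⟨hm2, ⟨y, hy⟩, ?_, ?_, ?_⟩
  · rw [hsupp]; exact hclause3
  · rw [hsupp]; exact hclause4
  · rw [hsupp]
    rcases hclause5 with h | h | h | h
    · exact Or.inl h
    · exact Or.inr (Or.inl h)
    · exact Or.inr (Or.inr (Or.inl h))
    · refine Or.inr (Or.inr (Or.inr ?_))
      rw [minComp_congr (Reachable.refl F r)] at h
      exact h

/-- **Main theorem, part 3:** backward ∘ forward = identity. -/
theorem bwd_fwd (hBR : P.IsBirootedForest F R) : P.bwdR (P.fwdMult F R) = R := by
  have hF : IsAcyclic P.endsRed F := hBR.1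
  have h2 := fwd_is2ERF hBR
  have hsupp := P.mSupport_fwdMult F R
  ext v
  constructor
  · -- bwdR ⊆ R
    intro hv
    rcases hv with rfl | ⟨hb, hk, hm⟩ | ⟨e, hAtt⟩
    · exact hBR.2.1
    · -- lone-minimum clause
      rw [hsupp] at hb hm
      obtain ⟨r, hrR, hrv⟩ := hBR.2.2.1 v
      have hrb : r ≠ ⊥ := by
        rintro rfl
        exact hb hrv
      -- r has no edge since the component count is 0
      have hS : (Finset.univ.filter fun s =>
          (P.rootEdgeF F R s).isSome ∧ Reachable P.endsRed F v s).card = 0 := by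
        rw [← P.compEdgeRoots_fwdMult hF R v]
        exact hk
      have hnone : ¬ (P.rootEdgeF F R r).isSome := by
        intro hsome
        have : r ∈ Finset.univ.filter fun s =>
            (P.rootEdgeF F R s).isSome ∧ Reachable P.endsRed F v s := by
          simp [hsome, hrv]
        rw [Finset.card_eq_zero] at hS
        rw [hS] at this
        exact Finset.notMem_empty _ this
      rw [P.rootEdgeF_isSome_iff hF] at hnone
      push_neg at hnone
      have hrt : r = P.targetR F R r := hnone hrR hrb
      -- the mate must be none
      cases hmate : P.mateO F R r with
      | some m =>
        exfalso
        obtain ⟨-, hmr, -⟩ := P.mateO_spec hmate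
        have : P.targetR F R r = m := by unfold targetR; rw [hmate]; rfl
        rw [this] at hrt
        exact hmr hrt.symm
      | none =>
        have : P.targetR F R r = minComp P.endsRed F r := by
          unfold targetR; rw [hmate]; rfl
        rw [this] at hrt
        have : r = minComp P.endsRed F v := by
          rw [hrt, minComp_congr hrv.symm]
        rw [← hm] at this
        rw [← this]
        exact hrR
    · -- attached clause
      have hm2 : 2 ≤ P.fwdMult F R e := hAtt.1
      have heF : e ∈ F := by
        by_contra hnf
        rw [P.fwdMult_of_not_mem hnf] at hm2
        omega
      have hfib : 0 < (Finset.univ.filter fun s => P.rootEdgeF F R s = some e).card := by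
        rw [P.fwdMult_of_mem heF] at hm2
        omega
      obtain ⟨r, hrmem⟩ := Finset.card_pos.1 hfib
      rw [Finset.mem_filter] at hrmem
      have hrsome := hrmem.2
      have hrR : r ∈ R := ((P.rootEdgeF_eq_some_iff hF).1 hrsome).1
      have hAttr : P.AttachedRoot (P.fwdMult F R) r e := attKey hBR hrR hrsome
      by_cases hvr : v = r
      · rw [hvr]
        exact hrR
      · obtain ⟨h3, hends⟩ := attached_unique h2 hAtt hAttr hvr
        have hcard : (Finset.univ.filter fun s => P.rootEdgeF F R s = some e).card = 2 := by
          rw [P.fwdMult_of_mem heF] at h3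
          omega
        obtain ⟨r1, r2, h12, hpair⟩ := Finset.card_eq_two.1 hcard
        have hr1 : P.rootEdgeF F R r1 = some e := by
          have : r1 ∈ Finset.univ.filter fun s => P.rootEdgeF F R s = some e := by
            rw [hpair]; simp
          exact (Finset.mem_filter.1 this).2
        have hr2 : P.rootEdgeF F R r2 = some e := by
          have : r2 ∈ Finset.univ.filter fun s => P.rootEdgeF F R s = some e := by
            rw [hpair]; simp
          exact (Finset.mem_filter.1 this).2
        have hr1R : r1 ∈ R := ((P.rootEdgeF_eq_some_iff hF).1 hr1).1
        have hr2R : r2 ∈ R := ((P.rootEdgeF_eq_some_iff hF).1 hr2).1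
        have hep : ∀ s' : P.Vred, P.rootEdgeF F R s' = some e → s' = v ∨ s' = r := by
          intro s' hs'
          obtain ⟨-, z, hz⟩ := P.rootEdgeF_endpoint hF hs'
          rw [hends] at hz
          rw [Sym2.eq_iff] at hz
          rcases hz with ⟨h', -⟩ | ⟨-, h'⟩
          · exact Or.inl h'.symm
          · exact Or.inr h'.symm
        rcases hep r1 hr1 with h' | h'
        · rw [← h']; exact hr1R
        · rcases hep r2 hr2 with h'' | h''
          · rw [← h'']; exact hr2R
          · exfalso
            rw [h', h''] at h12
            exact h12 rfl
  · -- R ⊆ bwdR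
    intro hvR
    by_cases hvb : v = ⊥
    · exact Or.inl hvb
    · cases hre : P.rootEdgeF F R v with
      | some e => exact Or.inr (Or.inr ⟨e, attKey hBR hvR hre⟩)
      | none =>
        -- lone minimum root
        refine Or.inr (Or.inl ?_)
        have hnone : ¬ (P.rootEdgeF F R v).isSome := by rw [hre]; simp
        rw [P.rootEdgeF_isSome_iff hF] at hnone
        push_neg at hnone
        have hvt : v = P.targetR F R v := hnone hvR hvb
        have hmate : P.mateO F R v = none := by
          cases hmate : P.mateO F R v with
          | none => rfl
          | some m =>
            exfalso
            obtain ⟨-, hmr, -⟩ := P.mateO_spec hmate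
            have : P.targetR F R v = m := by unfold targetR; rw [hmate]; rfl
            rw [this] at hvt
            exact hmr hvt.symm
        have hmin : v = minComp P.endsRed F v := by
          have : P.targetR F R v = minComp P.endsRed F v := by
            unfold targetR; rw [hmate]; rfl
          rw [← this]
          exact hvt
        rw [P.mateO_eq_none_iff] at hmate
        have hvbot : ¬ Reachable P.endsRed F v ⊥ :=
          fun hc => hmate ⟨⊥, hBR.2.1, Ne.symm hvb, hc⟩
        refine ⟨by rw [hsupp]; exact hvbot, ?_, by rw [hsupp]; exact hmin⟩
        rw [P.compEdgeRoots_fwdMult hF R v, Finset.card_eq_zero]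
        rw [Finset.filter_eq_empty_iff]
        rintro s - ⟨hsome, hsreach⟩
        rw [P.rootEdgeF_isSome_iff hF] at hsome
        obtain ⟨hsR, hsb, hst⟩ := hsome
        by_cases hsv : s = v
        · subst hsv
          exact hst hvt
        · exact hmate ⟨s, hsR, hsv, hsreach⟩

end BiconedGraph

set_option linter.unusedSectionVars false
set_option linter.unusedVariables false

open MWalk

namespace BiconedGraph

variable {P : BiconedGraph} {mult : P.Ered → ℕ}

lemma rootEdgeF_of_mem {F : Finset P.Ered} {R : Set P.Vred} {x : P.Vred}
    (hx : x ∈ R) (hxb : x ≠ ⊥) :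
    P.rootEdgeF F R x = twdO P.endsRed F x (P.targetR F R x) := by
  unfold rootEdgeF
  rw [if_pos ⟨hx, hxb⟩]

/-- An attached root is attached to a unique edge. -/
lemma attached_edge_unique {x : P.Vred} {e e' : P.Ered}
    (h : P.AttachedRoot mult x e) (h' : P.AttachedRoot mult x e') : e = e' := by
  by_contra hne
  obtain ⟨u', hu'⟩ := h'.2.1
  exact h.2.2.2.1 e' h'.1 (Ne.symm hne) x
    (by rw [hu']; exact Sym2.mem_mk_left _ _) (Reachable.refl _ _)

lemma mateO_eq_of_unique {F : Finset P.Ered} {R : Set P.Vred} {r r' : P.Vred}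
    (hr' : r' ∈ R) (hne : r' ≠ r) (hreach : Reachable P.endsRed F r r')
    (huniq : ∀ y ∈ R, Reachable P.endsRed F r y → y ≠ r → y = r') :
    P.mateO F R r = some r' := by
  cases hm : P.mateO F R r with
  | none =>
    rw [P.mateO_eq_none_iff] at hm
    exact absurd ⟨r', hr', hne, hreach⟩ hm
  | some m =>
    obtain ⟨hmR, hmne, hmreach⟩ := P.mateO_spec hm
    rw [huniq m hmR hmreach hmne]

/-- The forward edge of an attached root of `bwdR` is its attached edge. -/
lemma attKey2 (h2 : P.Is2ERF mult) {x : P.Vred} {e : P.Ered}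
    (hAtt : P.AttachedRoot mult x e) :
    P.rootEdgeF (P.mSupport mult) (P.bwdR mult) x = some e := by
  have hF : IsAcyclic P.endsRed (P.mSupport mult) := h2.1
  have hxR : x ∈ P.bwdR mult := Or.inr (Or.inr ⟨e, hAtt⟩)
  have hxb : x ≠ ⊥ := attached_ne_bot hAtt
  have heF : e ∈ P.mSupport mult := attached_mem_supp hAtt
  obtain ⟨u, hu⟩ := hAtt.2.1
  have heT : e ∈ P.Tset mult x := attached_mem_Tset hAtt (Reachable.refl _ _)
  have hk1 : 1 ≤ P.compEdgeRoots mult x := by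
    have := single_le_compEdgeRoots heT
    have := hAtt.1
    omega
  rw [rootEdgeF_of_mem hxR hxb]
  by_cases hb : Reachable P.endsRed (P.mSupport mult) x ⊥
  · -- ⊥-component
    have hk : P.compEdgeRoots mult x = 1 := by
      have := er_le_one_of_bot h2 hb
      omega
    obtain ⟨e0, x0, u0, hTs, hm20, hxu0, hnr0, hvx0, hside0, hx0ne, hAttx0, huniq⟩ :=
      bot_comp_structure h2 hb hk
    have hee0 : e = e0 := by
      have := heT
      rw [hTs, Finset.mem_singleton] at this
      exact this
    have hxx0 : x = x0 := huniq x e hAtt (Reachable.refl _ _)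
    have hmate : P.mateO (P.mSupport mult) (P.bwdR mult) x = some ⊥ := by
      refine mateO_eq_of_unique bot_mem_bwdR (Ne.symm hxb) hb ?_
      intro y hy hr hyx
      rcases bwd_root_cases hy hr with rfl | ⟨hc, -, -⟩ | ⟨e', hAtt'⟩
      · rfl
      · exact absurd hb hc
      · exact absurd ((huniq y e' hAtt' hr).trans hxx0.symm) hyx
    have htg : P.targetR (P.mSupport mult) (P.bwdR mult) x = ⊥ := by
      unfold targetR
      rw [hmate]
      rfl
    rw [htg, twdO_eq_some_iff hF]
    exact ⟨hb, heF, ⟨u, hu⟩, hAtt.2.2.1⟩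
  · have hk2 : P.compEdgeRoots mult x ≤ 2 := er_le_two h2 x
    have hkcases : P.compEdgeRoots mult x = 1 ∨ P.compEdgeRoots mult x = 2 := by omega
    rcases hkcases with hk | hk
    · -- one edge root
      obtain ⟨e0, x0, u0, hTs, hm20, hxu0, hnr0, hvx0, hAttx0, huniq⟩ :=
        nonbot_comp_structure_one h2 hb hk
      have hee0 : e = e0 := by
        have := heT
        rw [hTs, Finset.mem_singleton] at this
        exact this
      have hxx0 : x = x0 := huniq x e hAtt (Reachable.refl _ _)
      have hmate : P.mateO (P.mSupport mult) (P.bwdR mult) x = none := by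
        rw [P.mateO_eq_none_iff]
        rintro ⟨y, hy, hyne, hyreach⟩
        rcases bwd_root_cases hy hyreach with rfl | ⟨-, hk0, -⟩ | ⟨e', hAtt'⟩
        · exact hb hyreach
        · omega
        · exact hyne ((huniq y e' hAtt' hyreach).trans hxx0.symm)
      have htg : P.targetR (P.mSupport mult) (P.bwdR mult) x =
          minComp P.endsRed (P.mSupport mult) x := by
        unfold targetR
        rw [hmate]
        rfl
      rw [htg, twdO_eq_some_iff hF]
      refine ⟨reach_minComp x, heF, ⟨u, hu⟩, ?_⟩
      rw [hee0, hxx0, ← minComp_congr hvx0]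
      exact hnr0
    · -- two edge roots
      obtain ⟨x0, y0, hxy0, hsides, hvx0, hvy0, huniq, hdata⟩ :=
        nonbot_comp_structure_two h2 hb hk
      have hxcase : x = x0 ∨ x = y0 := huniq x e hAtt (Reachable.refl _ _)
      have hother : ∀ z, z ∈ P.bwdR mult →
          Reachable P.endsRed (P.mSupport mult) x z → z = x0 ∨ z = y0 := by
        intro z hz hr
        rcases bwd_root_cases hz hr with rfl | ⟨-, hk0, -⟩ | ⟨e', hAtt'⟩
        · exact absurd hr hb
        · omega
        · exact huniq z e' hAtt' hr
      rcases hdata with ⟨e0, hTs, hm3, hends0, hAtt0x, hAtt0y⟩ |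
        ⟨e1, e2, h12, hTs, hm1, hm2, hAtt1, hAtt2, hTwd1, hTwd2⟩
      · have hee0 : e = e0 := by
          have := heT
          rw [hTs, Finset.mem_singleton] at this
          exact this
        subst hee0
        rcases hxcase with rfl | rfl
        · -- x = x0, mate is y0
          have hmate : P.mateO (P.mSupport mult) (P.bwdR mult) x = some y0 := by
            refine mateO_eq_of_unique (Or.inr (Or.inr ⟨e, hAtt0y⟩))
              (Ne.symm hxy0) (hvx0.symm.trans hvy0) ?_
            intro z hz hr hzx
            rcases hother z hz hr with rfl | rfl
            · exact absurd rfl hzx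
            · rfl
          have htg : P.targetR (P.mSupport mult) (P.bwdR mult) x = y0 := by
            unfold targetR; rw [hmate]; rfl
          rw [htg, twdO_eq_some_iff hF]
          exact ⟨hvx0.symm.trans hvy0, heF, ⟨u, hu⟩, hF e heF x y0 hends0⟩
        · -- x = y0, mate is x0
          have hmate : P.mateO (P.mSupport mult) (P.bwdR mult) x = some x0 := by
            refine mateO_eq_of_unique (Or.inr (Or.inr ⟨e, hAtt0x⟩))
              hxy0 (hvy0.symm.trans hvx0) ?_
            intro z hz hr hzx
            rcases hother z hz hr with rfl | rfl
            · rfl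
            · exact absurd rfl hzx
          have htg : P.targetR (P.mSupport mult) (P.bwdR mult) x = x0 := by
            unfold targetR; rw [hmate]; rfl
          rw [htg, twdO_eq_some_iff hF]
          exact ⟨hvy0.symm.trans hvx0, heF, ⟨u, hu⟩,
            hF e heF x x0 (by rw [hends0, Sym2.eq_swap])⟩
      · rcases hxcase with rfl | rfl
        · have hee : e = e1 := attached_edge_unique hAtt hAtt1
          subst hee
          have hmate : P.mateO (P.mSupport mult) (P.bwdR mult) x = some y0 := by
            refine mateO_eq_of_unique (Or.inr (Or.inr ⟨e2, hAtt2⟩))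
              (Ne.symm hxy0) (hvx0.symm.trans hvy0) ?_
            intro z hz hr hzx
            rcases hother z hz hr with rfl | rfl
            · exact absurd rfl hzx
            · rfl
          have htg : P.targetR (P.mSupport mult) (P.bwdR mult) x = y0 := by
            unfold targetR; rw [hmate]; rfl
          rw [htg, twdO_eq_some_iff hF]
          exact ⟨hvx0.symm.trans hvy0, hTwd1⟩
        · have hee : e = e2 := attached_edge_unique hAtt hAtt2
          subst hee
          have hmate : P.mateO (P.mSupport mult) (P.bwdR mult) x = some x0 := by
            refine mateO_eq_of_unique (Or.inr (Or.inr ⟨e1, hAtt1⟩))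
              hxy0 (hvy0.symm.trans hvx0) ?_
            intro z hz hr hzx
            rcases hother z hz hr with rfl | rfl
            · rfl
            · exact absurd rfl hzx
          have htg : P.targetR (P.mSupport mult) (P.bwdR mult) x = x0 := by
            unfold targetR; rw [hmate]; rfl
          rw [htg, twdO_eq_some_iff hF]
          exact ⟨hvy0.symm.trans hvx0, hTwd2⟩

/-- The number of attached roots of an edge is its multiplicity minus one. -/
lemma card_attached (h2 : P.Is2ERF mult) {e : P.Ered} (heF : e ∈ P.mSupport mult) :
    (Finset.univ.filter fun x => P.AttachedRoot mult x e).card = mult e - 1 := by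
  have hF : IsAcyclic P.endsRed (P.mSupport mult) := h2.1
  by_cases hm1 : mult e ≤ 1
  · have hm1' : mult e = 1 := by
      have := P.mem_mSupport.1 heF
      omega
    have hempty : (Finset.univ.filter fun x => P.AttachedRoot mult x e) = ∅ := by
      rw [Finset.filter_eq_empty_iff]
      intro x _
      intro hAtt
      have := hAtt.1
      omega
    rw [hempty, hm1']
    simp
  · push_neg at hm1
    obtain ⟨a, b, hab⟩ := sym2_exists_rep (P.endsRed e)
    have heT : e ∈ P.Tset mult a := by
      rw [mem_Tset]
      exact ⟨hm1, P.touches_of_mem (by rw [hab]; exact Sym2.mem_mk_left _ _)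
        (Reachable.refl _ _)⟩
    have hk1 : 1 ≤ P.compEdgeRoots mult a := by
      have := single_le_compEdgeRoots heT
      omega
    have hreach_a : ∀ y : P.Vred, (∃ u', P.endsRed e = s(y, u')) →
        Reachable P.endsRed (P.mSupport mult) a y := by
      rintro y ⟨u', hu'⟩
      exact P.reach_of_touches heF
        (P.touches_of_mem (by rw [hab]; exact Sym2.mem_mk_left _ _) (Reachable.refl _ _))
        (by rw [hu']; exact Sym2.mem_mk_left _ _)
    by_cases hb : Reachable P.endsRed (P.mSupport mult) a ⊥
    · have hk : P.compEdgeRoots mult a = 1 := by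
        have := er_le_one_of_bot h2 hb
        omega
      obtain ⟨e0, x0, u0, hTs, hm20, hxu0, hnr0, hvx0, hside0, hx0ne, hAttx0, huniq⟩ :=
        bot_comp_structure h2 hb hk
      have hee0 : e = e0 := by
        have := heT; rw [hTs, Finset.mem_singleton] at this; exact this
      subst hee0
      have hset : (Finset.univ.filter fun x => P.AttachedRoot mult x e) = {x0} := by
        ext x
        simp only [Finset.mem_filter, Finset.mem_univ, true_and, Finset.mem_singleton]
        constructor
        · intro hAtt
          exact huniq x e hAtt (hreach_a x hAtt.2.1)
        · rintro rfl
          exact hAttx0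
      rw [hset, Finset.card_singleton, hm20]
    · have hk2 : P.compEdgeRoots mult a ≤ 2 := er_le_two h2 a
      have hkcases : P.compEdgeRoots mult a = 1 ∨ P.compEdgeRoots mult a = 2 := by omega
      rcases hkcases with hk | hk
      · obtain ⟨e0, x0, u0, hTs, hm20, hxu0, hnr0, hvx0, hAttx0, huniq⟩ :=
          nonbot_comp_structure_one h2 hb hk
        have hee0 : e = e0 := by
          have := heT; rw [hTs, Finset.mem_singleton] at this; exact this
        subst hee0
        have hset : (Finset.univ.filter fun x => P.AttachedRoot mult x e) = {x0} := by
          ext x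
          simp only [Finset.mem_filter, Finset.mem_univ, true_and, Finset.mem_singleton]
          constructor
          · intro hAtt
            exact huniq x e hAtt (hreach_a x hAtt.2.1)
          · rintro rfl
            exact hAttx0
        rw [hset, Finset.card_singleton, hm20]
      · obtain ⟨x0, y0, hxy0, hsides, hvx0, hvy0, huniq, hdata⟩ :=
          nonbot_comp_structure_two h2 hb hk
        rcases hdata with ⟨e0, hTs, hm3, hends0, hAtt0x, hAtt0y⟩ |
          ⟨e1, e2, h12, hTs, hm1', hm2', hAtt1, hAtt2, hTwd1, hTwd2⟩
        · have hee0 : e = e0 := by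
            have := heT; rw [hTs, Finset.mem_singleton] at this; exact this
          subst hee0
          have hset : (Finset.univ.filter fun x => P.AttachedRoot mult x e) = {x0, y0} := by
            ext x
            simp only [Finset.mem_filter, Finset.mem_univ, true_and, Finset.mem_insert,
              Finset.mem_singleton]
            constructor
            · intro hAtt
              exact huniq x e hAtt (hreach_a x hAtt.2.1)
            · rintro (rfl | rfl)
              · exact hAtt0x
              · exact hAtt0y
          rw [hset, Finset.card_insert_of_notMem (by simp [hxy0]),
            Finset.card_singleton, hm3]
        · have hee : e = e1 ∨ e = e2 := by
            have := heT
            rw [hTs, Finset.mem_insert, Finset.mem_singleton] at this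
            exact this
          rcases hee with rfl | rfl
          · have hset : (Finset.univ.filter fun x => P.AttachedRoot mult x e) = {x0} := by
              ext x
              simp only [Finset.mem_filter, Finset.mem_univ, true_and, Finset.mem_singleton]
              constructor
              · intro hAtt
                rcases huniq x e hAtt (hreach_a x hAtt.2.1) with rfl | rfl
                · rfl
                · exact absurd (attached_edge_unique hAtt hAtt2) h12
              · rintro rfl
                exact hAtt1
            rw [hset, Finset.card_singleton, hm1']
          · have hset : (Finset.univ.filter fun x => P.AttachedRoot mult x e) = {y0} := by
              ext x
              simp only [Finset.mem_filter, Finset.mem_univ, true_and, Finset.mem_singleton]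
              constructor
              · intro hAtt
                rcases huniq x e hAtt (hreach_a x hAtt.2.1) with rfl | rfl
                · exact absurd (attached_edge_unique hAtt hAtt1) (Ne.symm h12)
                · rfl
              · rintro rfl
                exact hAtt2
            rw [hset, Finset.card_singleton, hm2']

/-- **Main theorem, part 4:** forward ∘ backward = identity. -/
theorem fwd_bwd_mult (h2 : P.Is2ERF mult) :
    P.fwdMult (P.mSupport mult) (P.bwdR mult) = mult := by
  have hF : IsAcyclic P.endsRed (P.mSupport mult) := h2.1
  funext e
  by_cases heF : e ∈ P.mSupport mult
  · rw [P.fwdMult_of_mem heF]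
    have hfib : (Finset.univ.filter fun r =>
        P.rootEdgeF (P.mSupport mult) (P.bwdR mult) r = some e) =
        (Finset.univ.filter fun x => P.AttachedRoot mult x e) := by
      ext r
      simp only [Finset.mem_filter, Finset.mem_univ, true_and]
      constructor
      · intro hr
        obtain ⟨hrR, hrb, hTwd⟩ := (P.rootEdgeF_eq_some_iff hF).1 hr
        rcases hrR with rfl | ⟨hb', hk', hm'⟩ | ⟨e', hAtt'⟩
        · exact absurd rfl hrb
        · -- a lone-minimum root has no edge, contradiction
          exfalso
          have hmate : P.mateO (P.mSupport mult) (P.bwdR mult) r = none := by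
            rw [P.mateO_eq_none_iff]
            rintro ⟨y, hy, hyne, hyreach⟩
            rcases bwd_root_cases hy hyreach with rfl | ⟨-, -, hmy⟩ | ⟨e'', hAtt''⟩
            · exact hb' hyreach
            · exact hyne (hmy.trans hm'.symm)
            · have := attached_mem_Tset hAtt'' hyreach
              rw [P.Tset_eq_empty_of_zero hk'] at this
              exact Finset.notMem_empty _ this
          have htg : P.targetR (P.mSupport mult) (P.bwdR mult) r =
              minComp P.endsRed (P.mSupport mult) r := by
            unfold targetR; rw [hmate]; rfl
          have : r ≠ P.targetR (P.mSupport mult) (P.bwdR mult) r := isTwd_ne hTwd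
          rw [htg] at this
          exact this hm'
        · have := attKey2 h2 hAtt'
          have hee : e' = e := Option.some_injective _ (this.symm.trans hr)
          rw [← hee]
          exact hAtt'
      · intro hAtt
        exact attKey2 h2 hAtt
    rw [hfib, card_attached h2 heF]
    have := P.mem_mSupport.1 heF
    omega
  · rw [P.fwdMult_of_not_mem heF]
    have := P.mem_mSupport.not.1 heF
    simp only [ne_eq, not_not] at this
    omega

end BiconedGraph


/-- Lemma 3.6.  For any biconed graph `G^{A,B}` there is a
bijection between the set of birooted forests of `G^{A,B}_red` and the set of
2-edge-rooted forests of `G^{A,B}_red`. -/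
theorem birootedForests_equiv_twoEdgeRootedForests (P : BiconedGraph) :
    Nonempty ({FR : Finset P.Ered × Set P.Vred // P.IsBirootedForest FR.1 FR.2} ≃
      {mult : P.Ered → ℕ // P.Is2ERF mult}) := by
  refine ⟨{
    toFun := fun FR => ⟨P.fwdMult FR.1.1 FR.1.2, BiconedGraph.fwd_is2ERF FR.2⟩
    invFun := fun m => ⟨(P.mSupport m.1, P.bwdR m.1), BiconedGraph.bwd_isBirooted m.2⟩
    left_inv := ?_
    right_inv := ?_ }⟩
  · rintro ⟨⟨F, R⟩, hBR⟩
    apply Subtype.ext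
    simp only
    rw [Prod.ext_iff]
    exact ⟨P.mSupport_fwdMult F R, BiconedGraph.bwd_fwd hBR⟩
  · rintro ⟨mult, h2⟩
    apply Subtype.ext
    simp only
    exact BiconedGraph.fwd_bwd_mult h2

end

end BiconedPaper
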